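/- arXiv:2305.15107 — 7 statements merged into one kernel-verified Lean document; each statement's English description precedes it below -/
import Mathlib

section
/- Let n, r, s be positive integers, σ = r + s, and γ = gcd(r, s). Then there exists an invertible diagonal matrix D ∈ GL_n(ℂ) such that D·T_n(g_{r,s})·D^{−1} = e^{2πiγ/σ}·T_n(g_{r,s}). Consequently, the multiset of eigenvalues of T_n(g_{r,s}) is invariant under multiplication by e^{2πiγ/σ} = e^{2πi/ω}, where ω = σ/γ. -/
open Matrix Polynomial Real

/-- The `n × n` Toeplitz matrix generated by the symbol
`g_{r,s}(θ) = e^{irθ} + e^{-isθ}`. -/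
noncomputable def Tg (n r s : ℕ) : Matrix (Fin n) (Fin n) ℂ :=
  Matrix.of fun i j =>
    if (i : ℤ) - (j : ℤ) = (r : ℤ) ∨ (i : ℤ) - (j : ℤ) = -(s : ℤ) then 1 else 0

lemma charpoly_conj_aux {n : ℕ} (P Q M : Matrix (Fin n) (Fin n) ℂ) (hPQ : P * Q = 1) :
    (P * M * Q).charpoly = M.charpoly := by
  have key : charmatrix (P * M * Q) = P.map C * charmatrix M * Q.map C := by
    have h1 : (P.map C) * (Q.map C) = 1 := by
      rw [← Matrix.map_mul, hPQ, Matrix.map_one _ (map_zero C) (map_one C)]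
    simp only [charmatrix, RingHom.mapMatrix_apply, mul_sub, sub_mul, Matrix.map_mul]
    congr 1
    have hs : Matrix.scalar (Fin n) (X : ℂ[X]) = (X : ℂ[X]) • 1 := by
      simp [Matrix.scalar_apply, Matrix.smul_one_eq_diagonal]
    rw [hs, Matrix.mul_smul, Matrix.smul_mul, mul_one, h1]
  rw [Matrix.charpoly, key, det_mul, det_mul, mul_comm, ← mul_assoc, ← det_mul,
    ← Matrix.map_mul, mul_eq_one_comm.mp hPQ,
    Matrix.map_one _ (map_zero C) (map_one C), det_one, one_mul, Matrix.charpoly]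

lemma eval_charpoly_aux {n : ℕ} (M : Matrix (Fin n) (Fin n) ℂ) (x : ℂ) :
    M.charpoly.eval x = (Matrix.scalar _ x - M).det := by
  rw [Matrix.charpoly, eval_det, matPolyEquiv_charmatrix]
  simp

lemma roots_smul_aux {n : ℕ} (c : ℂ) (hc : c ≠ 0) (M : Matrix (Fin n) (Fin n) ℂ) :
    (c • M).charpoly.roots = M.charpoly.roots.map (fun a => c * a) := by
  set p := M.charpoly with hp
  have hM : p.Monic := Matrix.charpoly_monic M
  have hsplit : p.Splits := IsAlgClosed.splits p
  have hcard : p.roots.card = Fintype.card (Fin n) := by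
    rw [(splits_iff_card_roots).mp hsplit, hp, Matrix.charpoly_natDegree_eq_dim]
  have hprod : p = (p.roots.map fun a => X - C a).prod :=
    hsplit.eq_prod_roots_of_monic hM
  have key : (c • M).charpoly = ((p.roots.map (fun a => c * a)).map fun a => X - C a).prod := by
    apply Polynomial.funext; intro x
    have h1 : Matrix.scalar (Fin n) x - c • M = c • (Matrix.scalar (Fin n) (x / c) - M) := by
      rw [smul_sub]
      congr 1
      ext i j
      simp [Matrix.scalar_apply, Matrix.diagonal_apply, apply_ite (fun y => c * y),
        mul_div_cancel₀ _ hc]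
    rw [eval_charpoly_aux, h1, Matrix.det_smul, ← eval_charpoly_aux, ← hp]
    have h2 : p.eval (x / c) = (p.roots.map fun a => x / c - a).prod := by
      conv_lhs => rw [hprod]
      rw [eval_multiset_prod, Multiset.map_map]
      simp
    rw [h2, Multiset.map_map, eval_multiset_prod, Multiset.map_map]
    have h3 : (p.roots.map (eval x ∘ (fun a => X - C a) ∘ fun a => c * a)).prod
        = (p.roots.map fun a => c * (x / c - a)).prod := by
      apply congrArg
      apply Multiset.map_congr rfl
      intro a _
      simp only [Function.comp_apply, eval_sub, eval_X, eval_C]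
      field_simp
    rw [h3, Multiset.prod_map_mul]
    simp [hcard]
  rw [key, roots_multiset_prod_X_sub_C]

theorem stmt_2 (n r s : ℕ) (hn : 0 < n) (hr : 0 < r) (hs : 0 < s) :
    ∃ d : Fin n → ℂ, (∀ i, d i ≠ 0) ∧
      Matrix.diagonal d * Tg n r s * Matrix.diagonal (fun i => (d i)⁻¹) =
        Complex.exp (2 * π * Complex.I * (Nat.gcd r s) / (r + s)) • Tg n r s ∧
      ((Tg n r s).charpoly.roots).map
          (fun μ => Complex.exp (2 * π * Complex.I * (Nat.gcd r s) / (r + s)) * μ) =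
        (Tg n r s).charpoly.roots := by
  set σ : ℕ := r + s with hσdef
  have hσ0 : (σ : ℂ) ≠ 0 := Nat.cast_ne_zero.mpr (by omega)
  set a0 : ℤ := Int.gcdA r σ with ha0
  set b0 : ℤ := Int.gcdB r σ with hb0
  have hB : (Int.gcd (r:ℤ) (σ:ℤ) : ℤ) = r * a0 + σ * b0 := Int.gcd_eq_gcd_ab _ _
  have hgcd : Int.gcd (r:ℤ) (σ:ℤ) = Nat.gcd r s := by
    rw [Int.gcd_natCast_natCast, hσdef, add_comm, Nat.gcd_add_self_right]
  have hBℂ : (r:ℂ) * (a0:ℂ) + (σ:ℂ) * (b0:ℂ) = (Nat.gcd r s : ℂ) := by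
    have := hB
    rw [hgcd] at this
    exact_mod_cast congrArg (Int.cast : ℤ → ℂ) this.symm
  set w : ℂ := Complex.exp (2 * π * Complex.I * a0 / σ) with hw
  have hw0 : w ≠ 0 := Complex.exp_ne_zero _
  set ζ : ℂ := Complex.exp (2 * π * Complex.I * (Nat.gcd r s) / (r + s)) with hζ
  have hζ0 : ζ ≠ 0 := Complex.exp_ne_zero _
  have hζσ : ζ = Complex.exp (2 * π * Complex.I * (Nat.gcd r s) / (σ:ℂ)) := by
    rw [hζ]; norm_cast
  have hwr : w ^ (r : ℤ) = ζ := by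
    rw [hw, ← Complex.exp_int_mul, hζσ]
    have key : ((r:ℤ):ℂ) * (2 * π * Complex.I * a0 / σ) =
        2 * π * Complex.I * (Nat.gcd r s) / (σ:ℂ) + ((-b0 : ℤ):ℂ) * (2 * π * Complex.I) := by
      push_cast
      field_simp
      linear_combination hBℂ
    rw [key, Complex.exp_add, Complex.exp_int_mul_two_pi_mul_I, mul_one]
  have hwσ : w ^ (σ : ℤ) = 1 := by
    rw [hw, ← Complex.exp_int_mul]
    have key : ((σ:ℤ):ℂ) * (2 * π * Complex.I * a0 / σ) = (a0:ℂ) * (2 * π * Complex.I) := by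
      push_cast
      field_simp
    rw [key, Complex.exp_int_mul_two_pi_mul_I]
  have hws : w ^ (-(s : ℤ)) = ζ := by
    have : -(s:ℤ) = (r:ℤ) - (σ:ℤ) := by omega
    rw [this, zpow_sub₀ hw0, hwr, hwσ, div_one]
  have hsim : Matrix.diagonal (fun i : Fin n => w ^ (i : ℕ)) * Tg n r s *
        Matrix.diagonal (fun i : Fin n => (w ^ (i : ℕ))⁻¹) = ζ • Tg n r s := by
      ext i j
      rw [Matrix.mul_diagonal, Matrix.diagonal_mul, Matrix.smul_apply, smul_eq_mul]
      simp only [Tg, Matrix.of_apply]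
      split_ifs with h
      · rw [mul_one, mul_one, ← zpow_natCast w i, ← zpow_natCast w j, ← _root_.zpow_neg,
          ← zpow_add₀ hw0]
        rcases h with h | h
        · rw [show (i:ℤ) + -(j:ℤ) = (r:ℤ) by omega, hwr]
        · rw [show (i:ℤ) + -(j:ℤ) = -(s:ℤ) by omega, hws]
      · simp
  refine ⟨fun i => w ^ (i : ℕ), fun i => pow_ne_zero _ hw0, hsim, ?_⟩
  · have hDD : Matrix.diagonal (fun i : Fin n => w ^ (i : ℕ)) *
        Matrix.diagonal (fun i : Fin n => (w ^ (i : ℕ))⁻¹) = 1 := by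
      rw [Matrix.diagonal_mul_diagonal]
      have : (fun i : Fin n => w ^ (i:ℕ) * (w ^ (i:ℕ))⁻¹) = fun _ => (1:ℂ) := by
        funext i; exact mul_inv_cancel₀ (pow_ne_zero _ hw0)
      rw [this, Matrix.diagonal_one]
    have h1 : (ζ • Tg n r s).charpoly = (Tg n r s).charpoly := by
      rw [← hsim]
      exact charpoly_conj_aux _ _ _ hDD
    calc ((Tg n r s).charpoly.roots).map (fun μ => ζ * μ)
        = (ζ • Tg n r s).charpoly.roots := (roots_smul_aux ζ hζ0 _).symm
      _ = (Tg n r s).charpoly.roots := by rw [h1]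
end

section
/- Let n, r, s be positive integers and σ = r + s. Then for all indices 1 ≤ i, j ≤ n with i ≢ j (mod σ), the (i,j)-entry of the matrix power T_n(g_{r,s})^σ is zero. -/
open Matrix

lemma Tg_pow_aux (n r s : ℕ) (k : ℕ) :
    ∀ i j : Fin n, ¬ ((i : ℤ) ≡ (j : ℤ) + k * r [ZMOD ((r : ℤ) + s)]) →
      (Tg n r s ^ k) i j = 0 := by
  induction k with
  | zero =>
    intro i j h
    rw [pow_zero, Matrix.one_apply]
    rw [if_neg]
    intro hij
    exact h (by simp [hij, Int.ModEq.refl])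
  | succ k ih =>
    intro i j h
    rw [pow_succ, Matrix.mul_apply]
    apply Finset.sum_eq_zero
    intro l _
    by_cases hl : ((i : ℤ) ≡ (l : ℤ) + k * r [ZMOD ((r : ℤ) + s)])
    · -- then Tg l j must be 0
      have hlj : Tg n r s l j = 0 := by
        unfold Tg
        rw [Matrix.of_apply, if_neg]
        rintro (hd | hd)
        · apply h
          have : (l : ℤ) = (j : ℤ) + r := by linarith
          calc (i : ℤ) ≡ (l : ℤ) + k * r [ZMOD ((r : ℤ) + s)] := hl
            _ = (j : ℤ) + (k + 1) * r := by rw [this]; ring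
        · apply h
          have hls : (l : ℤ) = (j : ℤ) - s := by linarith
          have : ((j : ℤ) + k * r - s) ≡ ((j : ℤ) + (k + 1) * r) [ZMOD ((r : ℤ) + s)] := by
            have : ((j : ℤ) + (k + 1) * r) - ((j : ℤ) + k * r - s) = (r + s) := by ring
            exact (Int.modEq_iff_dvd.mpr (by rw [this])).symm.symm
          calc (i : ℤ) ≡ (l : ℤ) + k * r [ZMOD ((r : ℤ) + s)] := hl
            _ = (j : ℤ) + k * r - s := by rw [hls]; ring
            _ ≡ (j : ℤ) + (k + 1) * r [ZMOD ((r : ℤ) + s)] := this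
      rw [hlj, mul_zero]
    · rw [ih i l hl, zero_mul]

theorem stmt_3 (n r s : ℕ) (hn : 0 < n) (hr : 0 < r) (hs : 0 < s) :
    ∀ i j : Fin n, ¬ ((i : ℕ) ≡ (j : ℕ) [MOD r + s]) →
      (Tg n r s ^ (r + s)) i j = 0 := by
  intro i j h
  apply Tg_pow_aux
  intro hmod
  apply h
  rw [← Int.natCast_modEq_iff]
  have h0 : ((r + s : ℕ) : ℤ) * r ≡ 0 [ZMOD ((r : ℤ) + s)] :=
    (Int.modEq_iff_dvd.mpr ⟨(r : ℤ), by push_cast; ring⟩).symm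
  have h1 : ((i : ℕ) : ℤ) ≡ ((j : ℕ) : ℤ) [ZMOD ((r : ℤ) + s)] := by
    simpa using hmod.trans (Int.ModEq.add_left _ h0)
  push_cast
  exact h1
end

section
/- Let n, r, s be positive integers, σ = r + s, β_σ = n mod σ, and n_σ = (n − β_σ)/σ. Then the σ-th power T_n(g_{r,s})^σ is similar via a permutation matrix to a block-diagonal matrix with exactly σ diagonal blocks, of which β_σ blocks are square of size n_σ + 1 and the remaining σ − β_σ blocks are square of size n_σ. -/
open Matrix

/-- Block sizes: `β_σ = n % σ` blocks of size `n_σ + 1` and `σ - β_σ` blocks of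
size `n_σ`, where `n_σ = n / σ`. -/
def blockSize (n σ : ℕ) (i : Fin σ) : ℕ :=
  if (i : ℕ) < n % σ then n / σ + 1 else n / σ

lemma sum_blockSize (n σ : ℕ) (hσ : 0 < σ) :
    ∑ i : Fin σ, blockSize n σ i = n := by
  have hm : n % σ ≤ σ := le_of_lt (Nat.mod_lt _ hσ)
  have : ∀ i : Fin σ, blockSize n σ i = n / σ + (if (i : ℕ) < n % σ then 1 else 0) := by
    intro i; unfold blockSize; split <;> simp
  rw [Finset.sum_congr rfl fun i _ => this i, Finset.sum_add_distrib,
    Finset.sum_const, Finset.card_univ, Fintype.card_fin, smul_eq_mul,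
    Fin.sum_univ_eq_sum_range (fun i => if i < n % σ then (1:ℕ) else 0)]
  have : ∑ i ∈ Finset.range σ, (if i < n % σ then (1:ℕ) else 0) = n % σ := by
    have h1 : ∀ i, (if i < n % σ then (1:ℕ) else 0) = if i ∈ Finset.range (n % σ) then 1 else 0 := by
      intro i; simp [Finset.mem_range]
    rw [Finset.sum_congr rfl fun i _ => h1 i, Finset.sum_ite_mem,
      Finset.inter_eq_right.2 (Finset.range_subset_range.2 hm)]
    simp
  rw [this]
  have hdm := Nat.div_add_mod n σ
  omega

lemma Tg_pow_eq_zero (n r s k : ℕ) (i j : Fin n)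
    (h : ¬ ((r + s : ℤ) ∣ ((i : ℤ) - (j : ℤ) - k * r))) :
    (Tg n r s ^ k) i j = 0 := by
  induction k generalizing i j with
  | zero =>
    rw [pow_zero, Matrix.one_apply]
    split
    · exfalso; apply h; subst ‹i = j›; simp
    · rfl
  | succ k ih =>
    rw [pow_succ', Matrix.mul_apply]
    apply Finset.sum_eq_zero
    intro l _
    by_cases hl : (i : ℤ) - (l : ℤ) = (r : ℤ) ∨ (i : ℤ) - (l : ℤ) = -(s : ℤ)
    · have : (Tg n r s ^ k) l j = 0 := by
        apply ih
        intro ⟨c, hc⟩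
        apply h
        rcases hl with h1 | h1
        · exact ⟨c, by push_cast; linarith⟩
        · exact ⟨c - 1, by push_cast; ring_nf; ring_nf at hc; linarith⟩
      rw [this, mul_zero]
    · have : Tg n r s i l = 0 := by simp [Tg, hl]
      rw [this, zero_mul]

noncomputable def blockEquiv (n σ : ℕ) (hσ : 0 < σ) :
    Fin n ≃ (Σ i : Fin σ, Fin (blockSize n σ i)) := by
  apply Equiv.ofBijective (fun a : Fin n =>
    (⟨⟨(a : ℕ) % σ, Nat.mod_lt _ hσ⟩,
      ⟨(a : ℕ) / σ, by
        unfold blockSize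
        split
        · exact Nat.lt_succ_of_le (Nat.div_le_div_right (le_of_lt a.2))
        · rename_i hge
          simp only [not_lt] at hge
          have ha := a.2
          by_contra hcon
          push_neg at hcon
          have h1 : (a : ℕ) / σ = n / σ := le_antisymm (Nat.div_le_div_right (le_of_lt a.2)) hcon
          have h2 : σ * (n / σ) + (a : ℕ) % σ = (a : ℕ) := by
            rw [← h1]; exact Nat.div_add_mod (a : ℕ) σ
          have h3 := Nat.div_add_mod n σ
          omega⟩⟩ : Σ i : Fin σ, Fin (blockSize n σ i)))
  rw [Fintype.bijective_iff_injective_and_card]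
  constructor
  · intro a b hab
    have h1 : (a : ℕ) % σ = (b : ℕ) % σ := congrArg (Fin.val ∘ Sigma.fst) hab
    have h2 : (a : ℕ) / σ = (b : ℕ) / σ := by
      have := congrArg (fun p : Σ i : Fin σ, Fin (blockSize n σ i) => ((p.2 : ℕ))) hab
      simpa using this
    have ha := Nat.div_add_mod (a : ℕ) σ
    have hb : σ * ((a : ℕ) / σ) + (b : ℕ) % σ = (b : ℕ) := by
      rw [h2]; exact Nat.div_add_mod (b : ℕ) σ
    exact Fin.ext (by omega)
  · rw [Fintype.card_fin, Fintype.card_sigma]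
    simp only [Fintype.card_fin]
    exact (sum_blockSize n σ hσ).symm

lemma blockEquiv_fst (n σ : ℕ) (hσ : 0 < σ) (a : Fin n) :
    ((blockEquiv n σ hσ a).1 : ℕ) = (a : ℕ) % σ := rfl

theorem stmt_4 (n r s : ℕ) (hn : 0 < n) (hr : 0 < r) (hs : 0 < s) :
    ∃ (M : ∀ i : Fin (r + s),
        Matrix (Fin (blockSize n (r + s) i)) (Fin (blockSize n (r + s) i)) ℂ)
      (e : Fin n ≃ (Σ i : Fin (r + s), Fin (blockSize n (r + s) i))),
      Tg n r s ^ (r + s) = (Matrix.blockDiagonal' M).submatrix e e := by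
  have hσ : 0 < r + s := by omega
  set σ := r + s with hσdef
  refine ⟨fun k => fun x y =>
    (Tg n r s ^ σ) ((blockEquiv n σ hσ).symm ⟨k, x⟩) ((blockEquiv n σ hσ).symm ⟨k, y⟩),
    blockEquiv n σ hσ, ?_⟩
  ext a b
  rw [Matrix.submatrix_apply]
  erw [Matrix.blockDiagonal'_apply]
  split
  · rename_i h
    have hb : (⟨(blockEquiv n σ hσ a).1,
        cast (congr_arg (fun i => Fin (blockSize n σ i)) h.symm) (blockEquiv n σ hσ b).2⟩ :
        Σ i : Fin σ, Fin (blockSize n σ i)) = blockEquiv n σ hσ b := by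
      refine Sigma.ext h ?_
      exact cast_heq _ _
    have ha : (⟨(blockEquiv n σ hσ a).1, (blockEquiv n σ hσ a).2⟩ :
        Σ i : Fin σ, Fin (blockSize n σ i)) = blockEquiv n σ hσ a := by
      exact Sigma.eta _
    simp only [ha, hb, Equiv.symm_apply_apply]
  · rename_i h
    apply Tg_pow_eq_zero
    intro hdvd
    apply h
    have h1 : ((r + s : ℕ) : ℤ) ∣ ((a : ℤ) - (b : ℤ)) := by
      have h2 : ((r + s : ℕ) : ℤ) ∣ ((σ : ℕ) : ℤ) * r := ⟨r, by show ((σ:ℕ):ℤ) * r = ((r+s:ℕ):ℤ) * r; rw [hσdef]⟩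
      have := dvd_add hdvd h2
      simpa using this
    have hmod : (a : ℕ) % σ = (b : ℕ) % σ := by
      have := (Nat.modEq_iff_dvd (n := σ) (a := (b : ℕ)) (b := (a : ℕ))).2 (by exact_mod_cast h1)
      exact this.symm
    apply Fin.ext
    rw [blockEquiv_fst, blockEquiv_fst, hmod]
end

section
/- (Conjecture 1 for r = 1.) Let s be a positive integer and let n = m·(s+1) + β with integers m ≥ 1 and 0 ≤ β ≤ s. Let L be the m×m matrix with (i,j)-entry binomial(β+1, j − i + 1), and let U be the m×m upper bidiagonal matrix with ones on the main diagonal and on the first superdiagonal and zeros elsewhere. Set B = L·U^{s−β}. Then the characteristic polynomial of T_n(g_{1,s}) satisfies charpoly(T_n(g_{1,s}))(X) = X^{β} · q(X^{s+1}), where q is the characteristic polynomial of B. -/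
open Matrix Polynomial

/-- `Lmat m t` is the `m × m` matrix with `(i,j)`-entry `binomial(t, j - i + 1)`. -/
noncomputable def Lmat (m t : ℕ) : Matrix (Fin m) (Fin m) ℂ :=
  Matrix.of fun i j =>
    if (i : ℕ) ≤ (j : ℕ) + 1 then ((t.choose ((j : ℕ) + 1 - (i : ℕ)) : ℕ) : ℂ) else 0

/-- `Umat m` is the `m × m` upper bidiagonal matrix with ones on the main
diagonal and on the first superdiagonal, zeros elsewhere. -/
noncomputable def Umat (m : ℕ) : Matrix (Fin m) (Fin m) ℂ :=
  Matrix.of fun i j => if (j : ℕ) = (i : ℕ) ∨ (j : ℕ) = (i : ℕ) + 1 then 1 else 0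

open Finset

section Binomial

/-- Alternating Vandermonde: `∑ i (-1)^i C(x,i) C(y-i,t-i) = C(y-x,t)` for `x ≤ y`. -/
lemma altVdm : ∀ (x : ℕ) (y t : ℕ), x ≤ y →
    ∑ i ∈ range (t+1), (-1 : ℤ)^i * (x.choose i) * ((y - i).choose (t - i)) =
      ((y - x).choose t : ℤ) := by
  intro x
  induction x with
  | zero =>
    intro y t _
    rw [Finset.sum_eq_single 0]
    · simp
    · intro b _ hb
      rcases Nat.exists_eq_add_of_lt (Nat.pos_of_ne_zero hb) with ⟨c, rfl⟩
      simp [Nat.choose_eq_zero_of_lt (Nat.succ_pos c)]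
    · simp
  | succ x ih =>
    intro y t hxy
    rcases t with _ | tt
    · simp
    have h1 : ∑ i ∈ range (tt+1+1), (-1 : ℤ)^i * ((x+1).choose i) * ((y - i).choose (tt+1 - i))
        = ∑ i ∈ range (tt+1), (-1:ℤ)^(i+1) * ((x+1).choose (i+1)) * ((y - (i+1)).choose (tt+1 - (i+1)))
          + (y.choose (tt+1) : ℤ) := by
      rw [Finset.sum_range_succ' (fun i => (-1 : ℤ)^i * ((x+1).choose i) * ((y - i).choose (tt+1 - i))) (tt+1)]
      simp
    rw [h1]
    have h2 : ∀ i ∈ range (tt+1),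
        (-1:ℤ)^(i+1) * ((x+1).choose (i+1)) * ((y - (i+1)).choose (tt+1 - (i+1)))
        = (-1:ℤ)^(i+1) * (x.choose (i+1)) * ((y - (i+1)).choose (tt+1 - (i+1)))
          + (-(1:ℤ)) * ((-1)^i * (x.choose i) * (((y-1) - i).choose (tt - i))) := by
      intro i _
      have : (y - (i+1)) = (y - 1) - i := by omega
      rw [Nat.choose_succ_succ x i, this]
      have : tt + 1 - (i+1) = tt - i := by omega
      rw [this]
      push_cast
      ring
    rw [Finset.sum_congr rfl h2, Finset.sum_add_distrib, ← Finset.mul_sum]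
    have h3 : ∑ i ∈ range (tt+1), (-1:ℤ)^(i+1) * (x.choose (i+1)) * ((y - (i+1)).choose (tt+1 - (i+1)))
        + (y.choose (tt+1) : ℤ) = ((y-x).choose (tt+1) : ℤ) := by
      have := ih y (tt+1) (by omega)
      rw [Finset.sum_range_succ' (fun i => (-1 : ℤ)^i * (x.choose i) * ((y - i).choose (tt+1 - i))) (tt+1)] at this
      simpa using this
    have h4 : ∑ i ∈ range (tt+1), (-1:ℤ)^i * (x.choose i) * (((y-1) - i).choose (tt - i))
        = (((y-1) - x).choose tt : ℤ) := ih (y-1) tt (by omega)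
    rw [add_comm, ← add_assoc, add_comm ((y.choose (tt+1) : ℤ)), h3, h4]
    have h5 : y - x = (y - (x+1)) + 1 := by omega
    have h6 : y - 1 - x = y - (x+1) := by omega
    rw [h5, h6, Nat.choose_succ_succ (y - (x+1)) tt]
    push_cast
    ring

/-- the per-coefficient identity for the main recursion. -/
lemma per_t (s β A t : ℕ) (hβ : β ≤ s) :
    ((A+β+1).choose t : ℤ) = (A.choose t : ℤ) +
      ∑ j ∈ range t, (-1:ℤ)^j * (((s+1).choose (j+1) : ℤ) - ((s-β).choose (j+1) : ℤ))
        * ((A+s-j).choose (t-1-j)) := by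
  have key : ∀ x : ℕ, x ≤ s+1 →
      ∑ j ∈ range t, (-1:ℤ)^j * (x.choose (j+1)) * ((A+s-j).choose (t-1-j))
        = ((A+s+1).choose t : ℤ) - ((A+s+1-x).choose t : ℤ) := by
    intro x hx
    have h := altVdm x (A+s+1) t (by omega)
    rw [Finset.sum_range_succ' (fun i => (-1 : ℤ)^i * (x.choose i) * ((A+s+1 - i).choose (t - i))) t] at h
    have h2 : ∀ j ∈ range t,
        (-1:ℤ)^(j+1) * (x.choose (j+1)) * ((A+s+1 - (j+1)).choose (t - (j+1)))
        = (-(1:ℤ)) * ((-1)^j * (x.choose (j+1)) * ((A+s-j).choose (t-1-j))) := by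
      intro j _
      have e1 : A+s+1 - (j+1) = A+s-j := by omega
      have e2 : t - (j+1) = t-1-j := by omega
      rw [e1, e2]; ring
    rw [Finset.sum_congr rfl h2, ← Finset.mul_sum] at h
    simp only [Nat.sub_zero, Nat.choose_zero_right, pow_zero] at h
    -- h : -1 * S + 1 * (choose (A+s+1) t) = choose (A+s+1-x) t  (roughly)
    push_cast at h ⊢; linarith [h]
  have k1 := key (s+1) (le_refl _)
  have k2 := key (s-β) (by omega)
  have h2 : ∀ j ∈ range t,
      (-1:ℤ)^j * (((s+1).choose (j+1) : ℤ) - ((s-β).choose (j+1) : ℤ)) * ((A+s-j).choose (t-1-j))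
      = (-1:ℤ)^j * ((s+1).choose (j+1)) * ((A+s-j).choose (t-1-j))
        - (-1:ℤ)^j * ((s-β).choose (j+1)) * ((A+s-j).choose (t-1-j)) := by
    intro j _; ring
  rw [Finset.sum_congr rfl h2, Finset.sum_sub_distrib, k1, k2]
  have e1 : A+s+1-(s+1) = A := by omega
  have e2 : A+s+1-(s-β) = A+β+1 := by omega
  rw [e1, e2]
  ring

end Binomial

section Fside

variable (s : ℕ)

noncomputable def Fterm (n k : ℕ) : Polynomial ℂ :=
  (-1)^k * ((n - k*s).choose k : Polynomial ℂ) * X^(n - k*(s+1))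

noncomputable def Fp (n : ℕ) : Polynomial ℂ := ∑ k ∈ range (n+1), Fterm s n k

lemma pascal_cast {R : Type*} [Semiring R] (a b : ℕ) :
    (((a+1).choose (b+1) : ℕ) : R) = ((a.choose b : ℕ) : R) + ((a.choose (b+1) : ℕ) : R) := by
  have := Nat.choose_succ_succ a b
  simp only [Nat.succ_eq_add_one] at this
  rw [this]; push_cast; ring

lemma Fterm_zero (hs : 0 < s) {n k : ℕ} (hk : n < k * (s+1)) (hk0 : 0 < k) :
    Fterm s n k = 0 := by
  have hm : k * (s+1) = k*s + k := by ring
  have : (n - k*s).choose k = 0 := by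
    apply Nat.choose_eq_zero_of_lt; omega
  simp [Fterm, this]

lemma Fp_low (hs : 0 < s) {n : ℕ} (hn : n ≤ s) : Fp s n = X^n := by
  rw [Fp, Finset.sum_range_succ' (fun k => Fterm s n k) n]
  have h0 : Fterm s n 0 = X ^ n := by simp [Fterm]
  rw [h0]
  have : ∀ k ∈ range n, Fterm s n (k+1) = 0 := by
    intro k _
    apply Fterm_zero s hs _ (by omega : 0 < k+1)
    have hm : (k+1) * (s+1) = k*s + k + s + 1 := by ring
    omega
  rw [Finset.sum_congr rfl this]
  simp

lemma Fp_rec (hs : 0 < s) (d : ℕ) :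
    Fp s (d+s+1) = X * Fp s (d+s) - Fp s d := by
  have hXF : X * Fp s (d+s) = ∑ k ∈ range (d+s+1+1), X * Fterm s (d+s) k := by
    rw [Finset.sum_range_succ]
    have hz : Fterm s (d+s) (d+s+1) = 0 := by
      apply Fterm_zero s hs _ (by omega)
      have hm : (d+s+1) * (s+1) = (d+s+1)*s + d + s + 1 := by ring
      omega
    rw [hz, mul_zero, add_zero, Fp, Finset.mul_sum]
  have hFd : Fp s d = ∑ k ∈ range (d+s+1+1), (if k = 0 then 0 else Fterm s d (k-1)) := by
    have hsub : ∑ k ∈ range (d+1), Fterm s d k = ∑ k ∈ range (d+s+1), Fterm s d k := by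
      apply Finset.sum_subset (Finset.range_subset_range.mpr (by omega))
      intro x hx hnx
      simp only [Finset.mem_range, not_lt] at hnx
      apply Fterm_zero s hs _ (by omega)
      have hm : x * (s+1) = x*s + x := by ring
      omega
    rw [Finset.sum_range_succ' (fun k => if k = 0 then 0 else Fterm s d (k-1)) (d+s+1)]
    norm_num
    rw [Fp, hsub]
  have hgoal : ∀ k ∈ range (d+s+1+1),
      Fterm s (d+s+1) k + (if k = 0 then 0 else Fterm s d (k-1)) = X * Fterm s (d+s) k := by
    intro k _
    rcases Nat.eq_zero_or_pos k with rfl | hk0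
    · simp only [if_pos rfl, add_zero, Fterm]
      simp [pow_succ]; ring
    obtain ⟨kk, rfl⟩ := Nat.exists_eq_succ_of_ne_zero (Nat.pos_iff_ne_zero.mp hk0)
    rw [if_neg (Nat.succ_ne_zero kk)]
    simp only [Nat.succ_eq_add_one, Nat.add_sub_cancel]
    have hm1 : (kk+1) * (s+1) = kk*s + kk + s + 1 := by ring
    have hm2 : (kk+1) * s = kk*s + s := by ring
    rcases Nat.lt_or_ge (d+s) ((kk+1)*(s+1)) with hc | hc
    · rcases Nat.lt_or_ge (d+s+1) ((kk+1)*(s+1)) with hc2 | hc2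
      · rw [Fterm_zero s hs hc2 (by omega), Fterm_zero s hs hc (by omega),
          Fterm_zero s hs (n := d) (k := kk) ?_ ?_]
        · ring
        · have hm3 : kk * (s+1) = kk*s+kk := by ring
          omega
        · rcases Nat.eq_zero_or_pos kk with rfl | h
          · have h0 : (0+1)*(s+1) = s+1 := by ring
            omega
          · exact h
      · -- (kk+1)*(s+1) = d+s+1 exactly
        have hco : (kk+1)*(s+1) = d+s+1 := by omega
        have e1 : Fterm s (d+s+1) (kk+1) = (-1)^(kk+1) := by
          rw [Fterm]
          have e : d+s+1 - (kk+1)*s = kk+1 := by omega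
          have e' : d+s+1 - (kk+1)*(s+1) = 0 := by omega
          rw [e, e']
          simp
        have e2 : Fterm s d kk = (-1)^kk := by
          rw [Fterm]
          have hm3 : (kk+1)*s = kk*s + s := by ring
          have hm4 : kk * (s+1) = kk*s+kk := by ring
          have e : d - kk*s = kk := by omega
          have e' : d - kk*(s+1) = 0 := by omega
          rw [e, e']
          simp
        have e3 : Fterm s (d+s) (kk+1) = 0 := Fterm_zero s hs (by omega) (by omega)
        rw [e1, e2, e3, pow_succ]
        ring
    · -- main zone : Pascal
      have hks : (kk+1) * s ≤ d + s := by omega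
      have e1 : d+s+1 - (kk+1)*s = (d+s-(kk+1)*s) + 1 := by omega
      have e2 : d - kk*s = d+s-(kk+1)*s := by omega
      have e3 : d+s+1 - (kk+1)*(s+1) = (d+s-(kk+1)*(s+1)) + 1 := by omega
      have e4 : d - kk*(s+1) = (d+s-(kk+1)*(s+1)) + 1 := by
        have hm3 : kk * (s+1) = kk*s+kk := by ring
        omega
      rw [Fterm, Fterm, Fterm, e1, e2, e3, e4, pascal_cast, pow_succ, pow_succ]
      ring
  rw [hXF, hFd, Fp, ← Finset.sum_congr rfl hgoal, Finset.sum_add_distrib]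
  ring

lemma sum_tri {M : Type*} [AddCommMonoid M] (n : ℕ) (f : ℕ → ℕ → M) :
    ∑ j ∈ range (n+1), ∑ k ∈ range (n+1-j), f j k
      = ∑ t ∈ range (n+1), ∑ j ∈ range (t+1), f j (t-j) := by
  induction n with
  | zero => simp
  | succ n ih =>
    rw [Finset.sum_range_succ (fun t => ∑ j ∈ range (t+1), f j (t-j)) (n+1), ← ih]
    rw [Finset.sum_range_succ (fun j => ∑ k ∈ range (n+1+1-j), f j k) (n+1)]
    have e0 : n+1+1-(n+1) = 1 := by omega
    rw [e0]
    have e1 : ∀ j ∈ range (n+1), ∑ k ∈ range (n+1+1-j), f j k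
        = ∑ k ∈ range (n+1-j), f j k + f j (n+1-j) := by
      intro j hj
      simp only [Finset.mem_range] at hj
      have : n+1+1-j = (n+1-j)+1 := by omega
      rw [this, Finset.sum_range_succ]
    rw [Finset.sum_congr rfl e1, Finset.sum_add_distrib]
    have e2 : ∑ j ∈ range (n+1+1), f j (n+1-j)
        = ∑ j ∈ range (n+1), f j (n+1-j) + f (n+1) (n+1-(n+1)) := Finset.sum_range_succ _ _
    rw [e2]
    have e3 : n+1-(n+1) = 0 := by omega
    rw [e3]
    simp [Finset.sum_range_one]
    abel

end Fside

section TgSide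
/-- the characteristic matrix entry of `Tg` as a function of index values -/
noncomputable def cmv (s iv jv : ℕ) : Polynomial ℂ :=
  (if iv = jv then X else 0) -
    (if (iv:ℤ) - (jv:ℤ) = 1 ∨ (iv:ℤ) - (jv:ℤ) = -(s:ℤ) then 1 else 0)

lemma cm_apply (n s : ℕ) (i j : Fin n) :
    charmatrix (Tg n 1 s) i j = cmv s (i:ℕ) (j:ℕ) := by
  rw [charmatrix_apply, Matrix.diagonal_apply, cmv]
  congr 1
  · exact if_congr Fin.val_inj.symm rfl rfl
  · show C (Tg n 1 s i j) = _
    rw [Tg]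
    simp only [Matrix.of_apply, Nat.cast_one]
    split <;> simp

lemma cmv_shift (s a b : ℕ) : cmv s (a+1) (b+1) = cmv s a b := by
  unfold cmv
  congr 1
  · exact if_congr (by omega) rfl rfl
  · exact if_congr (by push_cast; omega) rfl rfl

lemma cmv_bigrow (s iv : ℕ) (h2 : 2 ≤ iv) : cmv s iv 0 = 0 := by
  unfold cmv
  rw [if_neg (by omega), if_neg (by push_cast; omega)]
  ring


lemma cmv_shift_gen (s a b a' b' : ℕ) (h1 : (a = b) ↔ (a' = b'))
    (h2 : ((a:ℤ) - b = 1 ∨ (a:ℤ) - b = -(s:ℤ)) ↔ ((a':ℤ) - b' = 1 ∨ (a':ℤ) - b' = -(s:ℤ))) :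
    cmv s a b = cmv s a' b' := by
  unfold cmv
  exact congrArg₂ (· - ·) (if_congr h1 rfl rfl) (if_congr h2 rfl rfl)

lemma Tg_rec (ss d : ℕ) :
    (Tg (d+ss+1+1) 1 (ss+1)).charpoly
      = X * (Tg (d+ss+1) 1 (ss+1)).charpoly - (Tg d 1 (ss+1)).charpoly := by
  show (charmatrix (Tg (d+ss+1+1) 1 (ss+1))).det = _
  set M := charmatrix (Tg (d+ss+1+1) 1 (ss+1)) with hM
  rw [Matrix.det_succ_column_zero]
  rw [Fin.sum_univ_succ, Fin.sum_univ_succ]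
  have h00 : M 0 0 = X := by
    rw [hM, cm_apply]
    show cmv (ss+1) 0 0 = X
    unfold cmv
    rw [if_pos rfl, if_neg ?hneg]
    · ring
    case hneg =>
      rintro (h | h)
      · norm_num at h
      · push_cast at h
        omega
  have h10 : M (0 : Fin (d+ss+1)).succ 0 = -1 := by
    rw [hM, cm_apply]
    show cmv (ss+1) ((0 : Fin (d+ss+1)).succ : ℕ) ((0 : Fin (d+ss+1+1)) : ℕ) = -1
    rw [Fin.val_succ, Fin.val_zero, Fin.val_zero]
    unfold cmv
    rw [if_neg (by omega), if_pos (Or.inl (by norm_num))]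
    ring
  have hrest : ∑ i : Fin (d+ss), (-1 : Polynomial ℂ)^((i.succ.succ : Fin (d+ss+1+1)) : ℕ)
      * M i.succ.succ 0 * ((M.submatrix i.succ.succ.succAbove Fin.succ).det) = 0 := by
    apply Finset.sum_eq_zero
    intro i _
    have hz : M i.succ.succ 0 = 0 := by
      rw [hM, cm_apply]
      show cmv (ss+1) ((i.succ.succ : Fin (d+ss+1+1)) : ℕ) ((0 : Fin (d+ss+1+1)) : ℕ) = 0
      rw [Fin.val_succ, Fin.val_succ, Fin.val_zero]
      exact cmv_bigrow (ss+1) _ (by omega)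
    rw [hz]; ring
  have hminor0 : M.submatrix (Fin.succAbove 0) Fin.succ = charmatrix (Tg (d+ss+1) 1 (ss+1)) := by
    refine Matrix.ext (fun i j => ?_)
    rw [Matrix.submatrix_apply, Fin.succAbove_zero, hM, cm_apply, cm_apply]
    show cmv (ss+1) (i.succ : ℕ) (j.succ : ℕ) = _
    rw [Fin.val_succ, Fin.val_succ, cmv_shift]
  have hrowval : ∀ a : Fin (d+ss+1),
      ((((0 : Fin (d+ss+1)).succ).succAbove a : Fin (d+ss+1+1)) : ℕ)
        = if (a:ℕ) < 1 then (a:ℕ) else (a:ℕ)+1 := by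
    intro a
    rw [Fin.succAbove]
    rcases Nat.lt_or_ge (a : ℕ) 1 with h | h
    · rw [if_pos (by simpa [Fin.lt_def] using h), if_pos h]
      simp
    · rw [if_neg (by simp [Fin.lt_def]; rintro rfl; simp at h), if_neg (by omega)]
      simp
  set minor1 := M.submatrix ((0 : Fin (d+ss+1)).succ).succAbove Fin.succ with hminor1
  have hm1app : ∀ (a b : Fin (d+ss+1)),
      minor1 a b = cmv (ss+1) (if (a:ℕ) < 1 then (a:ℕ) else (a:ℕ)+1) ((b:ℕ)+1) := by
    intro a b
    rw [hminor1, Matrix.submatrix_apply, hM, cm_apply, hrowval, Fin.val_succ]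
  have hdetminor1 : minor1.det = - (Tg d 1 (ss+1)).charpoly := by
    rw [Matrix.det_succ_row_zero]
    have hrow0 : ∀ j : Fin (d+ss+1), minor1 0 j = if (j:ℕ) = ss then -1 else 0 := by
      intro j
      rw [hm1app]
      simp only [Fin.val_zero, Nat.zero_lt_one, if_true]
      unfold cmv
      rw [if_neg (by omega)]
      rcases eq_or_ne (j : ℕ) ss with h | h
      · rw [if_pos (Or.inr (by push_cast; omega)), if_pos h]
        ring
      · rw [if_neg (by intro hc; push_cast at hc; omega), if_neg h]
        ring
    set j0 : Fin (d+ss+1) := ⟨ss, by omega⟩ with hj0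
    rw [Finset.sum_eq_single j0 ?hother (by intro h; exact absurd (Finset.mem_univ _) h)]
    case hother =>
      intro j _ hj
      rw [hrow0, if_neg (by intro hv; exact hj (Fin.ext hv))]
      ring
    rw [hrow0]
    have hj0v : ((j0 : Fin (d+ss+1)) : ℕ) = ss := rfl
    rw [hj0v, if_pos rfl]
    set K := minor1.submatrix Fin.succ j0.succAbove with hKdef
    have hcolval : ∀ b : Fin (d+ss), ((j0.succAbove b : Fin (d+ss+1)) : ℕ)
        = if (b:ℕ) < ss then (b:ℕ) else (b:ℕ)+1 := by
      intro b
      rw [Fin.succAbove]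
      rcases Nat.lt_or_ge (b : ℕ) ss with h | h
      · rw [if_pos (by simpa [Fin.lt_def, hj0] using h), if_pos h]
        simp
      · rw [if_neg (by simp [Fin.lt_def, hj0]; omega), if_neg (by omega)]
        simp
    have hK : ∀ (a b : Fin (d+ss)), K a b
        = cmv (ss+1) ((a:ℕ)+1+1) ((if (b:ℕ) < ss then (b:ℕ) else (b:ℕ)+1)+1) := by
      intro a b
      rw [hKdef, Matrix.submatrix_apply, hm1app]
      have e1 : ((a.succ : Fin (d+ss+1)) : ℕ) = (a:ℕ)+1 := Fin.val_succ a
      rw [e1, if_neg (by omega), hcolval]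
    set e : (Fin ss ⊕ Fin d) ≃ Fin (d+ss) :=
      finSumFinEquiv.trans (finCongr (Nat.add_comm ss d)) with he
    have hdetK : K.det = (K.submatrix e e).det := (Matrix.det_submatrix_equiv_self e K).symm
    have heval : ∀ x : Fin ss ⊕ Fin d, ((e x : Fin (d+ss)) : ℕ)
        = Sum.elim (fun a : Fin ss => (a:ℕ)) (fun c : Fin d => ss + (c:ℕ)) x := by
      intro x
      rcases x with a | c
      · simp [he, Equiv.trans_apply, finCongr_apply]
      · simp [he, Equiv.trans_apply, finCongr_apply]
        omega
    set P := K.submatrix e e with hPdef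
    set Ablk : Matrix (Fin ss) (Fin ss) (Polynomial ℂ) :=
      Matrix.of (fun a b => (if (b:ℕ) = (a:ℕ)+1 then (X : Polynomial ℂ) else 0)
        - (if (a:ℕ) = (b:ℕ) then 1 else 0)) with hAdef
    have hP11 : P.toBlocks₁₁ = Ablk := by
      refine Matrix.ext (fun a b => ?_)
      show P (Sum.inl a) (Sum.inl b) = Ablk a b
      rw [hPdef, Matrix.submatrix_apply, hK, heval, heval]
      simp only [Sum.elim_inl]
      simp only [b.isLt, ↓reduceIte]
      rw [hAdef]
      show cmv (ss+1) ((a:ℕ)+1+1) ((b:ℕ)+1) = _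
      unfold cmv
      simp only [Matrix.of_apply]
      congr 1
      · exact if_congr (by omega) rfl rfl
      · refine if_congr ?_ rfl rfl
        constructor
        · intro h
          rcases h with h | h
          · push_cast at h; omega
          · exfalso; push_cast at h; omega
        · intro h
          exact Or.inl (by push_cast; omega)
    have hP21 : P.toBlocks₂₁ = 0 := by
      refine Matrix.ext (fun c b => ?_)
      show P (Sum.inr c) (Sum.inl b) = 0
      rw [hPdef, Matrix.submatrix_apply, hK, heval, heval]
      simp only [Sum.elim_inr, Sum.elim_inl]
      simp only [b.isLt, ↓reduceIte]
      unfold cmv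
      rw [if_neg (by omega), if_neg ?hcond]
      · show (0 : Polynomial ℂ) - 0 = 0
        ring
      case hcond =>
        intro h
        rcases h with h | h <;> (push_cast at h; omega)
    have hP22 : P.toBlocks₂₂ = charmatrix (Tg d 1 (ss+1)) := by
      refine Matrix.ext (fun c c' => ?_)
      show P (Sum.inr c) (Sum.inr c') = _
      rw [hPdef, Matrix.submatrix_apply, hK, heval, heval, cm_apply]
      simp only [Sum.elim_inr]
      simp only [show ¬(ss + (c':ℕ) < ss) from by omega, ↓reduceIte]
      refine cmv_shift_gen _ _ _ _ _ (by omega) ?_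
      constructor
      · intro h
        rcases h with h | h
        · exact Or.inl (by push_cast at h ⊢; omega)
        · exact Or.inr (by push_cast at h ⊢; omega)
      · intro h
        rcases h with h | h
        · exact Or.inl (by push_cast at h ⊢; omega)
        · exact Or.inr (by push_cast at h ⊢; omega)
    have hAdet : Ablk.det = (-1)^ss := by
      have htri : Ablk.BlockTriangular id := by
        intro i j hij
        have hij' : (j:ℕ) < (i:ℕ) := hij
        rw [hAdef]
        show (if (j:ℕ) = (i:ℕ)+1 then (X : Polynomial ℂ) else 0)
          - (if (i:ℕ) = (j:ℕ) then 1 else 0) = 0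
        rw [if_neg (by omega), if_neg (by omega)]
        ring
      rw [Matrix.det_of_upperTriangular htri]
      have hd : ∀ i : Fin ss, Ablk i i = -1 := by
        intro i
        rw [hAdef]
        show (if (i:ℕ) = (i:ℕ)+1 then (X : Polynomial ℂ) else 0)
          - (if (i:ℕ) = (i:ℕ) then 1 else 0) = -1
        rw [if_neg (by omega), if_pos rfl]
        ring
      rw [Finset.prod_congr rfl (fun i _ => hd i), Finset.prod_const]
      simp
    have hPblocks : P = Matrix.fromBlocks P.toBlocks₁₁ P.toBlocks₁₂ P.toBlocks₂₁ P.toBlocks₂₂ :=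
      (Matrix.fromBlocks_toBlocks P).symm
    have hdetP : P.det = (-1)^ss * (Tg d 1 (ss+1)).charpoly := by
      rw [hPblocks, hP21, hP11, hP22, Matrix.det_fromBlocks_zero₂₁, hAdet]
      rfl
    rw [hdetK, hdetP]
    have hs2 : ((-1 : Polynomial ℂ))^ss * ((-1 : Polynomial ℂ))^ss = 1 := by
      rw [← pow_add]
      have h2 : ss + ss = 2 * ss := by ring
      rw [h2, pow_mul]
      norm_num
    calc (-1:Polynomial ℂ)^ss * (-1) * ((-1)^ss * (Tg d 1 (ss+1)).charpoly)
        = ((-1:Polynomial ℂ)^ss * (-1)^ss) * (-1) * (Tg d 1 (ss+1)).charpoly := by ring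
      _ = - (Tg d 1 (ss+1)).charpoly := by rw [hs2]; ring
  rw [h00, h10, hminor0, hdetminor1, hrest]
  show 1 * X * (Tg (d+ss+1) 1 (ss+1)).charpoly
      + ((-1)^(((0 : Fin (d+ss+1)).succ : Fin (d+ss+1+1)) : ℕ) * (-1)
        * (- (Tg d 1 (ss+1)).charpoly) + 0) = _
  rw [Fin.val_succ, Fin.val_zero]
  show 1 * X * (Tg (d+ss+1) 1 (ss+1)).charpoly
      + ((-1)^(0+1) * (-1) * (- (Tg d 1 (ss+1)).charpoly) + 0) = _
  ring


lemma Tg_low (s n : ℕ) (hs : 0 < s) (hn : n ≤ s) : (Tg n 1 s).charpoly = X^n := by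
  show (charmatrix (Tg n 1 s)).det = X^n
  have htri : (charmatrix (Tg n 1 s)).BlockTriangular OrderDual.toDual := by
    intro i j hij
    have hij' : (i:ℕ) < (j:ℕ) := hij
    rw [cm_apply]
    unfold cmv
    rw [if_neg (by omega), if_neg ?hcond]
    · ring
    case hcond =>
      rintro (h | h)
      · push_cast at h; omega
      · push_cast at h
        have := j.isLt
        omega
  rw [Matrix.det_of_lowerTriangular _ htri]
  have hd : ∀ i : Fin n, charmatrix (Tg n 1 s) i i = X := by
    intro i
    rw [cm_apply]
    unfold cmv
    rw [if_pos rfl, if_neg ?hcond2]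
    · ring
    case hcond2 =>
      rintro (h | h)
      · norm_num at h
      · push_cast at h; omega
  rw [Finset.prod_congr rfl (fun i _ => hd i), Finset.prod_const]
  simp

lemma Tg_eq_Fp (s : ℕ) (hs : 0 < s) : ∀ n, (Tg n 1 s).charpoly = Fp s n := by
  intro n
  induction n using Nat.strong_induction_on with
  | _ n ih =>
    rcases Nat.lt_or_ge n (s+1) with h | h
    · rw [Tg_low s n hs (by omega), Fp_low s hs (by omega)]
    · obtain ⟨ss, rfl⟩ : ∃ ss, s = ss + 1 := ⟨s-1, by omega⟩
      obtain ⟨d, rfl⟩ : ∃ d, n = d + ss + 1 + 1 := ⟨n-ss-2, by omega⟩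
      rw [Tg_rec ss d, ih (d+ss+1) (by omega), ih d (by omega)]
      exact (Fp_rec (ss+1) hs d).symm


section Wside

noncomputable def vpure (s j : ℕ) : Polynomial ℂ :=
  (if j = 0 then X else 0) - ((s+1).choose (j+1) : Polynomial ℂ)

noncomputable def vbeta (s β j : ℕ) : Polynomial ℂ :=
  (if j = 0 then X else 0) -
    (((s+1).choose (j+1) : Polynomial ℂ) - ((s-β).choose (j+1) : Polynomial ℂ))

noncomputable def Wmat (s k : ℕ) (v : ℕ → Polynomial ℂ) : Matrix (Fin k) (Fin k) (Polynomial ℂ) :=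
  Matrix.of fun i j =>
    if (i : ℕ) = 0 then v (j : ℕ)
    else (if (i:ℕ) = (j:ℕ) then X else 0)
      - (if (i:ℕ) ≤ (j:ℕ)+1 then (((s+1).choose ((j:ℕ)+1-(i:ℕ)) : ℕ) : Polynomial ℂ) else 0)

noncomputable def qpure (s t : ℕ) : Polynomial ℂ := (Wmat s t (vpure s)).det

lemma vbeta_s (s : ℕ) : vbeta s s = vpure s := by
  funext j
  unfold vbeta vpure
  rw [Nat.sub_self, Nat.choose_eq_zero_of_lt (Nat.succ_pos j)]
  push_cast
  ring

lemma Wmat_rec (s k : ℕ) (v : ℕ → Polynomial ℂ) :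
    (Wmat s (k+1+1) v).det
      = v 0 * qpure s (k+1) + (Wmat s (k+1) (fun j => v (j+1))).det := by
  rw [Matrix.det_succ_column_zero, Fin.sum_univ_succ, Fin.sum_univ_succ]
  have h00 : Wmat s (k+1+1) v 0 0 = v 0 := rfl
  have h10 : Wmat s (k+1+1) v (0 : Fin (k+1)).succ 0 = -1 := by
    unfold Wmat
    simp only [Matrix.of_apply, Fin.val_succ, Fin.val_zero]
    simp
  have hrest : ∑ i : Fin k, (-1 : Polynomial ℂ)^((i.succ.succ : Fin (k+1+1)) : ℕ)
      * Wmat s (k+1+1) v i.succ.succ 0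
      * ((Wmat s (k+1+1) v).submatrix i.succ.succ.succAbove Fin.succ).det = 0 := by
    apply Finset.sum_eq_zero
    intro i _
    have hz : Wmat s (k+1+1) v i.succ.succ 0 = 0 := by
      unfold Wmat
      simp only [Matrix.of_apply, Fin.val_succ, Fin.val_zero]
      simp
    rw [hz]; ring
  have hminor0 : (Wmat s (k+1+1) v).submatrix (Fin.succAbove 0) Fin.succ
      = Wmat s (k+1) (vpure s) := by
    refine Matrix.ext (fun i j => ?_)
    rw [Matrix.submatrix_apply, Fin.succAbove_zero]
    show Wmat s (k+1+1) v i.succ j.succ = _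
    unfold Wmat
    simp only [Matrix.of_apply, Fin.val_succ]
    rw [if_neg (show ¬((i:ℕ)+1 = 0) from by omega)]
    rcases Nat.eq_zero_or_pos (i : ℕ) with h | h
    · rw [if_pos (show (i:ℕ) = 0 from h)]
      unfold vpure
      congr 1
      · exact if_congr (by omega) rfl rfl
      · rw [if_pos (show (i:ℕ)+1 ≤ (j:ℕ)+1+1 from by omega)]
        have h1 : (j:ℕ)+1+1-((i:ℕ)+1) = (j:ℕ)+1 := by omega
        rw [h1]
    · rw [if_neg (show ¬((i:ℕ) = 0) from by omega)]
      congr 1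
      · exact if_congr (by omega) rfl rfl
      · rcases Nat.lt_or_ge ((j:ℕ)+1) (i:ℕ) with h2 | h2
        · rw [if_neg (show ¬((i:ℕ)+1 ≤ (j:ℕ)+1+1) from by omega),
            if_neg (show ¬((i:ℕ) ≤ (j:ℕ)+1) from by omega)]
        · rw [if_pos (show (i:ℕ)+1 ≤ (j:ℕ)+1+1 from by omega),
            if_pos (show (i:ℕ) ≤ (j:ℕ)+1 from h2)]
          have h1 : (j:ℕ)+1+1-((i:ℕ)+1) = (j:ℕ)+1-(i:ℕ) := by omega
          rw [h1]
  have hminor1 : (Wmat s (k+1+1) v).submatrix ((0 : Fin (k+1)).succ).succAbove Fin.succ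
      = Wmat s (k+1) (fun j => v (j+1)) := by
    refine Matrix.ext (fun i j => ?_)
    rw [Matrix.submatrix_apply]
    have hrowval : ((((0 : Fin (k+1)).succ).succAbove i : Fin (k+1+1)) : ℕ)
        = if (i:ℕ) < 1 then (i:ℕ) else (i:ℕ)+1 := by
      rw [Fin.succAbove]
      rcases Nat.lt_or_ge (i : ℕ) 1 with h | h
      · rw [if_pos (by simpa [Fin.lt_def] using h), if_pos h]
        simp
      · rw [if_neg (by simp [Fin.lt_def]; rintro rfl; simp at h), if_neg (by omega)]
        simp
    have happ : ∀ (p : Fin (k+1+1)) (q : Fin (k+1+1)), Wmat s (k+1+1) v p q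
        = (if (p : ℕ) = 0 then v (q : ℕ)
          else (if (p:ℕ) = (q:ℕ) then X else 0)
            - (if (p:ℕ) ≤ (q:ℕ)+1 then (((s+1).choose ((q:ℕ)+1-(p:ℕ)) : ℕ) : Polynomial ℂ) else 0)) :=
      fun _ _ => rfl
    rw [happ]
    have hcol : ((j.succ : Fin (k+1+1)) : ℕ) = (j:ℕ)+1 := Fin.val_succ j
    rw [hcol, hrowval]
    rcases Nat.lt_or_ge (i : ℕ) 1 with h | h
    · rw [if_pos h, if_pos (show (i:ℕ) = 0 from by omega)]
      show v ((j:ℕ)+1) = Wmat s (k+1) (fun j => v (j+1)) i j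
      unfold Wmat
      simp only [Matrix.of_apply]
      rw [if_pos (show (i:ℕ) = 0 from by omega)]
    · rw [if_neg (show ¬((i:ℕ) < 1) from by omega),
        if_neg (show ¬((i:ℕ)+1 = 0) from by omega)]
      show _ = Wmat s (k+1) (fun j => v (j+1)) i j
      unfold Wmat
      simp only [Matrix.of_apply]
      rw [if_neg (show ¬((i:ℕ) = 0) from by omega)]
      congr 1
      · exact if_congr (by omega) rfl rfl
      · rcases Nat.lt_or_ge ((j:ℕ)+1) (i:ℕ) with h2 | h2
        · rw [if_neg (show ¬((i:ℕ)+1 ≤ (j:ℕ)+1+1) from by omega),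
            if_neg (show ¬((i:ℕ) ≤ (j:ℕ)+1) from by omega)]
        · rw [if_pos (show (i:ℕ)+1 ≤ (j:ℕ)+1+1 from by omega),
            if_pos (show (i:ℕ) ≤ (j:ℕ)+1 from h2)]
          have h1 : (j:ℕ)+1+1-((i:ℕ)+1) = (j:ℕ)+1-(i:ℕ) := by omega
          rw [h1]
  rw [h00, h10, hminor0, hminor1, hrest]
  show 1 * (v 0) * (qpure s (k+1))
      + ((-1)^(((0 : Fin (k+1)).succ : Fin (k+1+1)) : ℕ) * (-1)
        * ((Wmat s (k+1) (fun j => v (j+1))).det) + 0) = _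
  rw [Fin.val_succ, Fin.val_zero]
  show 1 * (v 0) * (qpure s (k+1))
      + ((-1)^(0+1) * (-1) * ((Wmat s (k+1) (fun j => v (j+1))).det) + 0) = _
  ring

lemma Wmat_unroll (s : ℕ) : ∀ (k : ℕ) (v : ℕ → Polynomial ℂ),
    (Wmat s (k+1) v).det = ∑ j ∈ range (k+1), v j * qpure s (k-j) := by
  intro k
  induction k with
  | zero =>
    intro v
    rw [Matrix.det_fin_one]
    show v 0 = ∑ j ∈ range 1, v j * qpure s (0-j)
    rw [Finset.sum_range_one]
    have h : qpure s 0 = 1 := Matrix.det_fin_zero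
    rw [h, mul_one]
  | succ k ih =>
    intro v
    rw [Wmat_rec, ih]
    rw [Finset.sum_range_succ' (fun j => v j * qpure s (k+1-j)) (k+1)]
    have he : ∀ j ∈ range (k+1), v (j+1) * qpure s (k-j) = v (j+1) * qpure s (k+1-(j+1)) := by
      intro j _
      congr 2
      omega
    rw [Finset.sum_congr rfl he]
    simp only [Nat.sub_zero]
    ring


noncomputable def cpol (s β j : ℕ) : Polynomial ℂ :=
  ((s+1).choose (j+1) : Polynomial ℂ) - ((s-β).choose (j+1) : Polynomial ℂ)


noncomputable def Gterm (s m β k : ℕ) : Polynomial ℂ :=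
  (-1)^k * ((m*(s+1)+β - k*s).choose k : Polynomial ℂ) * X^(m-k)

noncomputable def Gp (s m β : ℕ) : Polynomial ℂ := ∑ k ∈ range (m+1), Gterm s m β k

lemma Gterm_zero (s m β k : ℕ) (hβ : β ≤ s) (hk : m < k) : Gterm s m β k = 0 := by
  have h1 : m*(s+1) = m*s+m := by ring
  have h3 : k*(s+1) = k*s+k := by ring
  have h4 : (m+1)*(s+1) ≤ k*(s+1) := Nat.mul_le_mul_right (s+1) (by omega)
  have h5 : (m+1)*(s+1) = m*s+m+s+1 := by ring
  rw [Gterm, Nat.choose_eq_zero_of_lt (by omega)]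
  simp

lemma Gp_ext (s m β N : ℕ) (hβ : β ≤ s) (hN : m+1 ≤ N) :
    Gp s m β = ∑ k ∈ range N, Gterm s m β k := by
  apply Finset.sum_subset (Finset.range_subset_range.mpr hN)
  intro x hx hnx
  simp only [Finset.mem_range, not_lt] at hnx
  exact Gterm_zero s m β x hβ (by omega)

lemma key_t (s β m t : ℕ) (hβ : β ≤ s) (ht : t ≤ m) :
    Gterm s (m+1) β (t+1)
      = X * Gterm s m s (t+1)
        - ∑ j ∈ range (t+1), cpol s β j * Gterm s (m-j) s (t-j) := by
  obtain ⟨A, hA⟩ : ∃ A, A = m*(s+1)+s - (t+1)*s := ⟨_, rfl⟩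
  have p1 : m*(s+1) = m*s+m := by ring
  have p2 : (t+1)*s = t*s+s := by ring
  have p3 : t*s ≤ m*s := Nat.mul_le_mul_right s ht
  have p4 : (m+1)*(s+1) = m*s+m+s+1 := by ring
  have hL : Gterm s (m+1) β (t+1)
      = (-1)^(t+1) * ((A+β+1).choose (t+1) : Polynomial ℂ) * X^(m-t) := by
    rw [Gterm]
    have e1 : (m+1)*(s+1)+β-(t+1)*s = A+β+1 := by omega
    have e2 : m+1-(t+1) = m-t := by omega
    rw [e1, e2]
  have hX : X * Gterm s m s (t+1)
      = (-1)^(t+1) * ((A).choose (t+1) : Polynomial ℂ) * X^(m-t) := by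
    rcases Nat.lt_or_ge t m with h | h
    · rw [Gterm, ← hA]
      have e2 : m-t = (m-(t+1))+1 := by omega
      rw [e2, pow_succ]
      ring
    · have htm : t = m := by omega
      have hz1 : Gterm s m s (t+1) = 0 := Gterm_zero s m s (t+1) (le_refl s) (by omega)
      have p5 : t*s = m*s := by rw [htm]
      have hz2 : A = m := by omega
      have hz3 : (A.choose (t+1)) = 0 := by
        rw [hz2]; exact Nat.choose_eq_zero_of_lt (by omega)
      rw [hz1, hz3]
      push_cast
      ring
  have hJ : ∀ j ∈ range (t+1), cpol s β j * Gterm s (m-j) s (t-j)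
      = -(((-1)^(t+1) * X^(m-t))
          * ((-1:Polynomial ℂ)^j * cpol s β j * ((A+s-j).choose (t-j) : Polynomial ℂ))) := by
    intro j hj
    simp only [Finset.mem_range] at hj
    have q1 : (m-j)*(s+1) = (m-j)*s + (m-j) := by ring
    have q2 : (m-j)*s + j*s = m*s := by
      rw [← Nat.add_mul]
      congr 1
      omega
    have q3 : (t-j)*s + j*s = t*s := by
      rw [← Nat.add_mul]
      congr 1
      omega
    have e1 : (m-j)*(s+1)+s-(t-j)*s = A+s-j := by omega
    have e2 : (m-j)-(t-j) = m-t := by omega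
    have hsign : (-1 : Polynomial ℂ)^(t-j) = -((-1)^(t+1) * (-1)^j) := by
      have h1 : t+1+j = (t-j) + (2*j+1) := by omega
      have : (-1 : Polynomial ℂ)^(t+1) * (-1)^j = (-1)^(t+1+j) := by rw [← pow_add]
      rw [this, h1, pow_add, pow_add, pow_mul]
      norm_num
    rw [Gterm, e1, e2, hsign]
    ring
  rw [hL, hX, Finset.sum_congr rfl hJ]
  rw [Finset.sum_neg_distrib, ← Finset.mul_sum]
  have hper := per_t s β A (t+1) hβ
  have hred : ∀ j, t+1-1-j = t-j := by intro j; omega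
  have hper2 : ((A+β+1).choose (t+1) : Polynomial ℂ)
      = ((A.choose (t+1) : ℕ) : Polynomial ℂ)
        + ∑ j ∈ range (t+1), (-1:Polynomial ℂ)^j
            * (((s+1).choose (j+1) : Polynomial ℂ) - ((s-β).choose (j+1) : Polynomial ℂ))
            * ((A+s-j).choose (t-j) : Polynomial ℂ) := by
    have hc := congrArg (fun z : ℤ => (z : Polynomial ℂ)) hper
    push_cast at hc
    try simp only [hred] at hc
    convert hc using 2
  have hsummand : ∀ j ∈ range (t+1),
      (-1:Polynomial ℂ)^j * cpol s β j * ((A+s-j).choose (t-j) : Polynomial ℂ)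
      = (-1:Polynomial ℂ)^j
          * (((s+1).choose (j+1) : Polynomial ℂ) - ((s-β).choose (j+1) : Polynomial ℂ))
          * ((A+s-j).choose (t-j) : Polynomial ℂ) := by
    intro j _; rw [cpol]
  rw [Finset.sum_congr rfl hsummand, hper2]
  ring

lemma key_sum (s β m : ℕ) (hβ : β ≤ s) :
    ∑ j ∈ range (m+1), vbeta s β j * Gp s (m-j) s = Gp s (m+1) β := by
  have hsplit : ∀ j ∈ range (m+1), vbeta s β j * Gp s (m-j) s
      = (if j = 0 then X * Gp s m s else 0) - cpol s β j * Gp s (m-j) s := by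
    intro j _
    rw [vbeta, cpol]
    rcases Nat.eq_zero_or_pos j with rfl | h
    · rw [if_pos rfl, if_pos rfl]
      simp only [Nat.sub_zero]
      ring
    · rw [if_neg (by omega), if_neg (by omega)]
      ring
  rw [Finset.sum_congr rfl hsplit, Finset.sum_sub_distrib]
  have hione : ∑ j ∈ range (m+1), (if j = 0 then X * Gp s m s else 0) = X * Gp s m s := by
    rw [Finset.sum_ite_eq' (range (m+1)) 0 (fun _ => X * Gp s m s)]
    rw [if_pos (Finset.mem_range.mpr (by omega))]
  rw [hione]
  have hGp : ∀ j ∈ range (m+1), cpol s β j * Gp s (m-j) s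
      = ∑ k ∈ range (m+1-j), cpol s β j * Gterm s (m-j) s k := by
    intro j hj
    simp only [Finset.mem_range] at hj
    rw [Gp, show (m-j)+1 = m+1-j from by omega, Finset.mul_sum]
  rw [Finset.sum_congr rfl hGp, sum_tri m (fun j k => cpol s β j * Gterm s (m-j) s k)]
  rw [show Gp s (m+1) β = ∑ k ∈ range (m+1+1), Gterm s (m+1) β k from rfl,
    Finset.sum_range_succ' (fun k => Gterm s (m+1) β k) (m+1)]
  rw [Gp_ext s m s (m+1+1) (le_refl s) (by omega), Finset.mul_sum,
    Finset.sum_range_succ' (fun k => X * Gterm s m s k) (m+1)]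
  have hpt : ∀ t ∈ range (m+1), ∑ j ∈ range (t+1), cpol s β j * Gterm s (m-j) s (t-j)
      = X * Gterm s m s (t+1) - Gterm s (m+1) β (t+1) := by
    intro t ht
    simp only [Finset.mem_range] at ht
    have hk := key_t s β m t hβ (by omega)
    rw [hk]
    ring
  rw [Finset.sum_congr rfl hpt, Finset.sum_sub_distrib]
  have h0 : Gterm s (m+1) β 0 = X * Gterm s m s 0 := by
    rw [Gterm, Gterm]
    simp only [Nat.choose_zero_right, Nat.sub_zero, pow_zero, Nat.mul_zero, Nat.zero_mul]
    push_cast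
    rw [pow_succ]
    ring
  rw [h0]
  ring

lemma qpure_eq (s : ℕ) : ∀ t, qpure s t = Gp s t s := by
  intro t
  induction t using Nat.strong_induction_on with
  | _ t ih =>
    rcases Nat.eq_zero_or_pos t with rfl | h
    · show (Wmat s 0 (vpure s)).det = Gp s 0 s
      rw [Matrix.det_fin_zero, Gp, Finset.sum_range_one, Gterm]
      simp
    · obtain ⟨k, rfl⟩ : ∃ k, t = k+1 := ⟨t-1, by omega⟩
      show (Wmat s (k+1) (vpure s)).det = _
      rw [Wmat_unroll s k (vpure s)]
      have hv : ∀ j ∈ range (k+1), vpure s j * qpure s (k-j) = vbeta s s j * Gp s (k-j) s := by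
        intro j _
        rw [vbeta_s s, ih (k-j) (by omega)]
      rw [Finset.sum_congr rfl hv, key_sum s s k (le_refl s)]

end Wside

section Bside

lemma Upow (m t : ℕ) (i j : Fin m) :
    (Umat m ^ t) i j = if (i:ℕ) ≤ (j:ℕ) then ((t.choose ((j:ℕ)-(i:ℕ)) : ℕ) : ℂ) else 0 := by
  induction t generalizing i j with
  | zero =>
    rw [pow_zero, Matrix.one_apply]
    rcases Nat.lt_trichotomy (i:ℕ) (j:ℕ) with h | h | h
    · rw [if_neg (fun he => by rw [he] at h; omega), if_pos (by omega),
        Nat.choose_eq_zero_of_lt (by omega)]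
      simp
    · rw [if_pos (Fin.ext h), if_pos (by omega), show (j:ℕ)-(i:ℕ) = 0 from by omega]
      simp
    · rw [if_neg (fun he => by rw [he] at h; omega), if_neg (by omega)]
  | succ t ih =>
    rw [pow_succ, Matrix.mul_apply]
    have hterm : ∀ k : Fin m, (Umat m ^ t) i k * Umat m k j
        = (if (j:ℕ) = (k:ℕ) then (Umat m ^ t) i k else 0)
          + (if (j:ℕ) = (k:ℕ)+1 then (Umat m ^ t) i k else 0) := by
      intro k
      show (Umat m ^ t) i k * (if (j:ℕ) = (k:ℕ) ∨ (j:ℕ) = (k:ℕ)+1 then (1:ℂ) else 0) = _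
      rcases eq_or_ne (j:ℕ) (k:ℕ) with h1 | h1
      · rw [if_pos (Or.inl h1), if_pos h1, if_neg (by omega)]
        ring
      · rcases eq_or_ne (j:ℕ) ((k:ℕ)+1) with h2 | h2
        · rw [if_pos (Or.inr h2), if_neg h1, if_pos h2]
          ring
        · rw [if_neg (by tauto), if_neg h1, if_neg h2]
          ring
    rw [Finset.sum_congr rfl (fun k _ => hterm k), Finset.sum_add_distrib]
    have hs1 : ∑ k : Fin m, (if (j:ℕ) = (k:ℕ) then (Umat m ^ t) i k else 0)
        = (Umat m ^ t) i j := by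
      rw [Finset.sum_eq_single j (fun k _ hk => if_neg (fun hv => hk (Fin.ext hv.symm)))
        (fun h => absurd (Finset.mem_univ _) h)]
      rw [if_pos rfl]
    rw [hs1]
    rcases Nat.eq_zero_or_pos (j:ℕ) with hj | hj
    · have hs2 : ∑ k : Fin m, (if (j:ℕ) = (k:ℕ)+1 then (Umat m ^ t) i k else 0) = 0 := by
        apply Finset.sum_eq_zero
        intro k _
        rw [if_neg (by omega)]
      rw [hs2, ih, add_zero]
      rcases Nat.eq_zero_or_pos (i:ℕ) with hi | hi
      · rw [if_pos (by omega), if_pos (by omega)]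
        rw [show (j:ℕ)-(i:ℕ) = 0 from by omega]
        simp
      · rw [if_neg (by omega), if_neg (by omega)]
    · set j' : Fin m := ⟨(j:ℕ)-1, by omega⟩ with hj'
      have hj'v : ((j' : Fin m) : ℕ) = (j:ℕ)-1 := rfl
      have hs2 : ∑ k : Fin m, (if (j:ℕ) = (k:ℕ)+1 then (Umat m ^ t) i k else 0)
          = (Umat m ^ t) i j' := by
        rw [Finset.sum_eq_single j'
          (fun k _ hk => if_neg (fun hv => hk (Fin.ext (by rw [hj'v]; omega))))
          (fun h => absurd (Finset.mem_univ _) h)]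
        rw [if_pos (by rw [hj'v]; omega)]
      rw [hs2, ih, ih, hj'v]
      rcases Nat.lt_or_ge (j:ℕ) (i:ℕ) with h | h
      · rw [if_neg (by omega), if_neg (by omega), if_neg (by omega)]
        ring
      · rcases eq_or_ne (i:ℕ) (j:ℕ) with h2 | h2
        · rw [if_pos (by omega), if_neg (by omega), if_pos (by omega)]
          rw [show (j:ℕ)-(i:ℕ) = 0 from by omega]
          simp
        · rw [if_pos (by omega), if_pos (by omega), if_pos (by omega)]
          rw [show (j:ℕ)-(i:ℕ) = ((j:ℕ)-1-(i:ℕ))+1 from by omega, pascal_cast]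
          ring
  
lemma vdm_cast (x y n : ℕ) :
    (((x+y).choose n : ℕ) : ℂ) = ∑ a ∈ range (n+1), ((x.choose a : ℕ) : ℂ) * ((y.choose (n-a) : ℕ) : ℂ) := by
  rw [Nat.add_choose_eq, Finset.Nat.sum_antidiagonal_eq_sum_range_succ_mk]
  push_cast
  rfl

lemma Bent (s β m : ℕ) (hβ : β ≤ s) (i j : Fin m) :
    (Lmat m (β+1) * Umat m ^ (s-β)) i j
      = if (i:ℕ) = 0
          then (((s+1).choose ((j:ℕ)+1) : ℕ) : ℂ) - (((s-β).choose ((j:ℕ)+1) : ℕ) : ℂ)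
          else (if (i:ℕ) ≤ (j:ℕ)+1 then (((s+1).choose ((j:ℕ)+1-(i:ℕ)) : ℕ) : ℂ) else 0) := by
  have hβs : (β+1) + (s-β) = s+1 := by omega
  rw [Matrix.mul_apply]
  have happ : ∀ k : Fin m, Lmat m (β+1) i k * (Umat m ^ (s-β)) k j
      = (fun kv => if (i:ℕ) ≤ kv+1 ∧ kv ≤ (j:ℕ)
          then (((β+1).choose (kv+1-(i:ℕ)) : ℕ) : ℂ) * (((s-β).choose ((j:ℕ)-kv) : ℕ) : ℂ)
          else 0) ((k : ℕ)) := by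
    intro k
    rw [Upow]
    show (if (i:ℕ) ≤ (k:ℕ)+1 then (((β+1).choose ((k:ℕ)+1-(i:ℕ)) : ℕ) : ℂ) else 0)
        * (if (k:ℕ) ≤ (j:ℕ) then (((s-β).choose ((j:ℕ)-(k:ℕ)) : ℕ) : ℂ) else 0)
      = if (i:ℕ) ≤ (k:ℕ)+1 ∧ (k:ℕ) ≤ (j:ℕ)
          then (((β+1).choose ((k:ℕ)+1-(i:ℕ)) : ℕ) : ℂ) * (((s-β).choose ((j:ℕ)-(k:ℕ)) : ℕ) : ℂ)
          else 0
    rcases Nat.lt_or_ge ((k:ℕ)+1) (i:ℕ) with h1 | h1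
    · rw [if_neg (show ¬((i:ℕ) ≤ (k:ℕ)+1) from by omega),
        if_neg (show ¬((i:ℕ) ≤ (k:ℕ)+1 ∧ (k:ℕ) ≤ (j:ℕ)) from by omega)]
      ring
    · rcases Nat.lt_or_ge (j:ℕ) (k:ℕ) with h2 | h2
      · rw [if_pos (show (i:ℕ) ≤ (k:ℕ)+1 from by omega), if_neg (show ¬((k:ℕ) ≤ (j:ℕ)) from by omega),
          if_neg (show ¬((i:ℕ) ≤ (k:ℕ)+1 ∧ (k:ℕ) ≤ (j:ℕ)) from by omega)]
        ring
      · rw [if_pos (show (i:ℕ) ≤ (k:ℕ)+1 from by omega), if_pos (show (k:ℕ) ≤ (j:ℕ) from h2),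
          if_pos (show (i:ℕ) ≤ (k:ℕ)+1 ∧ (k:ℕ) ≤ (j:ℕ) from by omega)]
  rw [Finset.sum_congr rfl (fun k _ => happ k),
    Fin.sum_univ_eq_sum_range (fun kv => if (i:ℕ) ≤ kv+1 ∧ kv ≤ (j:ℕ)
      then (((β+1).choose (kv+1-(i:ℕ)) : ℕ) : ℂ) * (((s-β).choose ((j:ℕ)-kv) : ℕ) : ℂ)
      else 0) m]
  have hshrink : ∑ kv ∈ range m, (if (i:ℕ) ≤ kv+1 ∧ kv ≤ (j:ℕ)
          then (((β+1).choose (kv+1-(i:ℕ)) : ℕ) : ℂ) * (((s-β).choose ((j:ℕ)-kv) : ℕ) : ℂ)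
          else 0)
      = ∑ kv ∈ range ((j:ℕ)+1), (if (i:ℕ) ≤ kv+1
          then (((β+1).choose (kv+1-(i:ℕ)) : ℕ) : ℂ) * (((s-β).choose ((j:ℕ)-kv) : ℕ) : ℂ)
          else 0) := by
    rw [← Finset.sum_subset (Finset.range_subset_range.mpr (show (j:ℕ)+1 ≤ m from j.isLt))
      (fun x _ hx => if_neg (fun hc => (by simp only [Finset.mem_range] at hx; omega : False)))]
    apply Finset.sum_congr rfl
    intro kv hkv
    simp only [Finset.mem_range] at hkv
    rcases Nat.lt_or_ge (kv+1) (i:ℕ) with h1 | h1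
    · rw [if_neg (by omega), if_neg (by omega)]
    · rw [if_pos (by omega), if_pos (by omega)]
  rw [hshrink]
  rcases Nat.eq_zero_or_pos (i:ℕ) with hi | hi
  · rw [if_pos hi]
    have hterm : ∀ kv ∈ range ((j:ℕ)+1), (if (i:ℕ) ≤ kv+1
          then (((β+1).choose (kv+1-(i:ℕ)) : ℕ) : ℂ) * (((s-β).choose ((j:ℕ)-kv) : ℕ) : ℂ)
          else 0)
        = (((β+1).choose (kv+1) : ℕ) : ℂ) * (((s-β).choose ((j:ℕ)-kv) : ℕ) : ℂ) := by
      intro kv _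
      rw [if_pos (by omega), show kv+1-(i:ℕ) = kv+1 from by omega]
    rw [Finset.sum_congr rfl hterm]
    have hv := vdm_cast (β+1) (s-β) ((j:ℕ)+1)
    rw [hβs] at hv
    rw [Finset.sum_range_succ'
      (fun a => (((β+1).choose a : ℕ) : ℂ) * (((s-β).choose ((j:ℕ)+1-a) : ℕ) : ℂ)) ((j:ℕ)+1)] at hv
    simp only [Nat.choose_zero_right, Nat.cast_one, one_mul, Nat.sub_zero] at hv
    have hrw : ∀ a ∈ range ((j:ℕ)+1),
        (((β+1).choose (a+1) : ℕ) : ℂ) * (((s-β).choose ((j:ℕ)+1-(a+1)) : ℕ) : ℂ)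
        = (((β+1).choose (a+1) : ℕ) : ℂ) * (((s-β).choose ((j:ℕ)-a) : ℕ) : ℂ) := by
      intro a _
      rw [show (j:ℕ)+1-(a+1) = (j:ℕ)-a from by omega]
    rw [Finset.sum_congr rfl hrw] at hv
    rw [hv]
    ring
  · rw [if_neg (by omega)]
    rcases Nat.lt_or_ge ((j:ℕ)+1) (i:ℕ) with hij | hij
    · rw [if_neg (by omega)]
      apply Finset.sum_eq_zero
      intro kv hkv
      simp only [Finset.mem_range] at hkv
      rw [if_neg (by omega)]
    · rw [if_pos (by omega)]
      have hzero : ∀ x ∈ range ((j:ℕ)+1), x ∉ Finset.Ico ((i:ℕ)-1) ((j:ℕ)+1) →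
          (if (i:ℕ) ≤ x+1
            then (((β+1).choose (x+1-(i:ℕ)) : ℕ) : ℂ) * (((s-β).choose ((j:ℕ)-x) : ℕ) : ℂ)
            else 0) = 0 := by
        intro x hx hnx
        simp only [Finset.mem_range] at hx
        simp only [Finset.mem_Ico] at hnx
        rw [if_neg (by omega)]
      rw [← Finset.sum_subset (show Finset.Ico ((i:ℕ)-1) ((j:ℕ)+1) ⊆ range ((j:ℕ)+1) from by
          rw [Finset.range_eq_Ico]; exact Finset.Ico_subset_Ico (by omega) (le_refl _)) hzero]
      rw [Finset.sum_Ico_eq_sum_range]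
      have hn : (j:ℕ)+1-((i:ℕ)-1) = ((j:ℕ)+1-(i:ℕ))+1 := by omega
      rw [hn]
      have hterm2 : ∀ a ∈ range (((j:ℕ)+1-(i:ℕ))+1),
          (if (i:ℕ) ≤ ((i:ℕ)-1+a)+1
            then (((β+1).choose (((i:ℕ)-1+a)+1-(i:ℕ)) : ℕ) : ℂ) * (((s-β).choose ((j:ℕ)-((i:ℕ)-1+a)) : ℕ) : ℂ)
            else 0)
          = (((β+1).choose a : ℕ) : ℂ) * (((s-β).choose (((j:ℕ)+1-(i:ℕ))-a) : ℕ) : ℂ) := by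
        intro a ha
        simp only [Finset.mem_range] at ha
        rw [if_pos (by omega), show ((i:ℕ)-1+a)+1-(i:ℕ) = a from by omega,
          show (j:ℕ)-((i:ℕ)-1+a) = ((j:ℕ)+1-(i:ℕ))-a from by omega]
      rw [Finset.sum_congr rfl hterm2]
      have hv := vdm_cast (β+1) (s-β) ((j:ℕ)+1-(i:ℕ))
      rw [hβs] at hv
      rw [← hv]

end Bside

lemma charm_B (s β m : ℕ) (hβ : β ≤ s) :
    charmatrix (Lmat m (β+1) * Umat m ^ (s-β)) = Wmat s m (vbeta s β) := by
  refine Matrix.ext (fun i j => ?_)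
  rw [charmatrix_apply, Matrix.diagonal_apply, Bent s β m hβ i j]
  unfold Wmat vbeta
  simp only [Matrix.of_apply]
  rcases Nat.eq_zero_or_pos (i:ℕ) with h | h
  · rw [if_pos (show (i:ℕ) = 0 from h), if_pos (show (i:ℕ) = 0 from h)]
    congr 1
    · exact if_congr (by rw [← Fin.val_inj]; omega) rfl rfl
    · rw [map_sub, map_natCast, map_natCast]
  · rw [if_neg (show ¬((i:ℕ) = 0) from by omega), if_neg (show ¬((i:ℕ) = 0) from by omega)]
    congr 1
    · exact if_congr Fin.val_inj.symm rfl rfl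
    · split
      · rw [map_natCast]
      · exact map_zero Polynomial.C

lemma charpoly_B (s β m : ℕ) (hβ : β ≤ s) (hm : 1 ≤ m) :
    (Lmat m (β+1) * Umat m ^ (s-β)).charpoly = Gp s m β := by
  obtain ⟨k, rfl⟩ : ∃ k, m = k+1 := ⟨m-1, by omega⟩
  show (charmatrix (Lmat (k+1) (β+1) * Umat (k+1) ^ (s-β))).det = _
  rw [charm_B s β (k+1) hβ, Wmat_unroll s k (vbeta s β)]
  have hv : ∀ j ∈ range (k+1), vbeta s β j * qpure s (k-j) = vbeta s β j * Gp s (k-j) s :=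
    fun j _ => by rw [qpure_eq s (k-j)]
  rw [Finset.sum_congr rfl hv, key_sum s β k hβ]

theorem stmt_7 (s : ℕ) (hs : 0 < s) (m β n : ℕ) (hm : 1 ≤ m) (hβ : β ≤ s)
    (hn : n = m * (s + 1) + β) :
    (Tg n 1 s).charpoly =
      X ^ β *
        ((Lmat m (β + 1) * Umat m ^ (s - β)).charpoly.comp (X ^ (s + 1))) := by
  subst hn
  rw [Tg_eq_Fp s hs (m*(s+1)+β), charpoly_B s β m hβ hm]
  rw [Gp, Polynomial.sum_comp, Finset.mul_sum]
  rw [Fp]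
  have hsub : ∑ k ∈ range (m*(s+1)+β+1), Fterm s (m*(s+1)+β) k
      = ∑ k ∈ range (m+1), Fterm s (m*(s+1)+β) k := by
    symm
    apply Finset.sum_subset (Finset.range_subset_range.mpr (by
      have h1 : m ≤ m*(s+1) := Nat.le_mul_of_pos_right m (by omega)
      omega))
    intro x hx hnx
    simp only [Finset.mem_range, not_lt] at hnx
    apply Fterm_zero s hs _ (by omega)
    have h3 : (m+1)*(s+1) ≤ x*(s+1) := Nat.mul_le_mul_right (s+1) (by omega)
    have h4 : (m+1)*(s+1) = m*(s+1)+s+1 := by ring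
    omega
  rw [hsub]
  apply Finset.sum_congr rfl
  intro k hk
  simp only [Finset.mem_range] at hk
  rw [Fterm, Gterm, Polynomial.mul_comp, Polynomial.mul_comp, Polynomial.pow_comp,
    Polynomial.neg_comp, Polynomial.one_comp, Polynomial.natCast_comp, Polynomial.pow_comp,
    Polynomial.X_comp, ← pow_mul]
  have hexp : m*(s+1)+β - k*(s+1) = β + (s+1)*(m-k) := by
    have h1 : (s+1)*(m-k) + k*(s+1) = m*(s+1) := by
      rw [mul_comm (s+1) (m-k), ← Nat.add_mul]
      congr 1
      omega
    have h2 : k*(s+1) ≤ m*(s+1) := Nat.mul_le_mul_right (s+1) (by omega)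
    omega
  rw [hexp, pow_add]
  ring
end TgSide
end

section
/- Let r, s be positive integers and σ = r + s. Then for every θ with 0 < θ ≤ π, one has r^{r}·s^{s}·sin(θ)^{σ} ≤ σ^{σ}·sin((r/σ)θ)^{r}·sin((s/σ)θ)^{s}; equivalently, 𝔟_{r,s}(θ) ≤ σ^{σ}/(r^{r}·s^{s}) = R^{σ} for all θ ∈ (0, π] (note sin((r/σ)θ) > 0 and sin((s/σ)θ) > 0 there, since 0 < rθ/σ < π and 0 < sθ/σ < π). Thus 𝔟_{r,s} attains its supremum value R^{σ} at θ = 0 (as a limit). -/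
open Real

lemma sin_frac_ge (l θ : ℝ) (hl0 : 0 ≤ l) (hl1 : l ≤ 1) (hθ0 : 0 ≤ θ)
    (hθπ : θ ≤ π) : l * Real.sin θ ≤ Real.sin (l * θ) := by
  have h := strictConcaveOn_sin_Icc.concaveOn.2 (x := θ) (y := 0)
    ⟨hθ0, hθπ⟩ ⟨le_refl 0, Real.pi_pos.le⟩ hl0 (by linarith : (0:ℝ) ≤ 1 - l)
    (by ring)
  simpa using h

theorem stmt_14 (r s : ℕ) (hr : 0 < r) (hs : 0 < s) :
    ∀ θ : ℝ, 0 < θ → θ ≤ π →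
      (r : ℝ) ^ r * (s : ℝ) ^ s * Real.sin θ ^ (r + s) ≤
        ((r : ℝ) + s) ^ (r + s) *
          (Real.sin (((r : ℝ) / ((r : ℝ) + s)) * θ) ^ r *
            Real.sin (((s : ℝ) / ((r : ℝ) + s)) * θ) ^ s) := by
  intro θ hθ0 hθπ
  have hσ : (0:ℝ) < (r : ℝ) + s := by positivity
  have hr1 : (r : ℝ) / ((r : ℝ) + s) ≤ 1 := by
    rw [div_le_one hσ]; linarith [show (0:ℝ) ≤ s from Nat.cast_nonneg s]
  have hs1 : (s : ℝ) / ((r : ℝ) + s) ≤ 1 := by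
    rw [div_le_one hσ]; linarith [show (0:ℝ) ≤ r from Nat.cast_nonneg r]
  have hr0 : (0:ℝ) ≤ (r : ℝ) / ((r : ℝ) + s) := by positivity
  have hs0 : (0:ℝ) ≤ (s : ℝ) / ((r : ℝ) + s) := by positivity
  have h1 := sin_frac_ge _ θ hr0 hr1 hθ0.le hθπ
  have h2 := sin_frac_ge _ θ hs0 hs1 hθ0.le hθπ
  have hsin : 0 ≤ Real.sin θ := Real.sin_nonneg_of_nonneg_of_le_pi hθ0.le hθπ
  have key : ((r : ℝ) / ((r : ℝ) + s) * Real.sin θ) ^ r *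
      ((s : ℝ) / ((r : ℝ) + s) * Real.sin θ) ^ s ≤
      Real.sin (((r : ℝ) / ((r : ℝ) + s)) * θ) ^ r *
        Real.sin (((s : ℝ) / ((r : ℝ) + s)) * θ) ^ s := by
    have hb : 0 ≤ Real.sin (((r : ℝ) / ((r : ℝ) + s)) * θ) :=
      le_trans (by positivity) h1
    exact mul_le_mul (pow_le_pow_left₀ (by positivity) h1 r)
      (pow_le_pow_left₀ (by positivity) h2 s) (by positivity)
      (by positivity)
  have heq : (r : ℝ) ^ r * (s : ℝ) ^ s * Real.sin θ ^ (r + s) =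
      ((r : ℝ) + s) ^ (r + s) *
        (((r : ℝ) / ((r : ℝ) + s) * Real.sin θ) ^ r *
          ((s : ℝ) / ((r : ℝ) + s) * Real.sin θ) ^ s) := by
    rw [mul_pow, mul_pow, div_pow, div_pow, pow_add]
    field_simp
    ring
  rw [heq]
  exact mul_le_mul_of_nonneg_left key (by positivity)
end

section
/- Let n, r, s be positive integers and σ = r + s. If λ is a real, positive eigenvalue of T_n(g_{r,s}), then 0 < λ ≤ R, where R = σ/(r^{r/σ}·s^{s/σ}); i.e., every positive real eigenvalue of T_n(g_{r,s}) is bounded above by σ·r^{−r/σ}·s^{−s/σ}. -/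
open Matrix Polynomial Real

lemma aux_mem_spectrum {m : ℕ} (A : Matrix (Fin m) (Fin m) ℂ) {μ : ℂ}
    (h : μ ∈ A.charpoly.roots) : μ ∈ spectrum ℂ A := by
  have hroot : A.charpoly.eval μ = 0 :=
    (Polynomial.mem_roots (A.charpoly_monic.ne_zero)).mp h
  have hmap : ((Polynomial.evalRingHom μ).mapMatrix (Matrix.charmatrix A)) =
      algebraMap ℂ (Matrix (Fin m) (Fin m) ℂ) μ - A := by
    ext i j
    by_cases hij : i = j
    · subst hij
      simp [Matrix.charmatrix_apply_eq, Matrix.algebraMap_matrix_apply]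
    · simp [Matrix.charmatrix_apply_ne _ _ _ hij, Matrix.algebraMap_matrix_apply, hij]
  have hdet : (algebraMap ℂ (Matrix (Fin m) (Fin m) ℂ) μ - A).det = 0 := by
    rw [← hmap, ← RingHom.map_det]
    simpa [Matrix.charpoly] using hroot
  rw [spectrum.mem_iff]
  intro hu
  rw [Matrix.isUnit_iff_isUnit_det, hdet] at hu
  exact hu.ne_zero rfl

theorem stmt_17 (n r s : ℕ) (hn : 0 < n) (hr : 0 < r) (hs : 0 < s) :
    ∀ lam : ℝ, 0 < lam → ((lam : ℂ) ∈ (Tg n r s).charpoly.roots) →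
      lam ≤ ((r : ℝ) + s) /
        ((r : ℝ) ^ ((r : ℝ) / ((r : ℝ) + s)) * (s : ℝ) ^ ((s : ℝ) / ((r : ℝ) + s))) := by
  intro lam hlam hroot
  have ha : (0 : ℝ) < r := by exact_mod_cast hr
  have hb : (0 : ℝ) < s := by exact_mod_cast hs
  have hσ : (0 : ℝ) < (r : ℝ) + s := by linarith
  set ρ : ℝ := ((s : ℝ) / r) ^ ((1 : ℝ) / ((r : ℝ) + s)) with hρdef
  have hρ : 0 < ρ := Real.rpow_pos_of_pos (div_pos hb ha) _
  have hc0 : ((ρ : ℂ)) ≠ 0 := by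
    exact_mod_cast (Complex.ofReal_ne_zero.mpr hρ.ne')
  -- the conjugating diagonal unit
  set d : Fin n → ℂ := fun i => (ρ : ℂ) ^ (i : ℕ) with hd
  have hdne : ∀ i, d i ≠ 0 := fun i => pow_ne_zero _ hc0
  set u : (Matrix (Fin n) (Fin n) ℂ)ˣ :=
    ⟨Matrix.diagonal d, Matrix.diagonal fun i => (d i)⁻¹,
      by
        have he : (fun i => d i * (d i)⁻¹) = fun _ : Fin n => (1 : ℂ) :=
          funext fun i => mul_inv_cancel₀ (hdne i)
        rw [Matrix.diagonal_mul_diagonal, he, Matrix.diagonal_one],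
      by
        have he : (fun i => (d i)⁻¹ * d i) = fun _ : Fin n => (1 : ℂ) :=
          funext fun i => inv_mul_cancel₀ (hdne i)
        rw [Matrix.diagonal_mul_diagonal, he, Matrix.diagonal_one]⟩ with hu
  set B : Matrix (Fin n) (Fin n) ℂ := u.val * Tg n r s * (u⁻¹).val with hB
  have hBentry : ∀ i j : Fin n, B i j = d i * Tg n r s i j * (d j)⁻¹ := by
    intro i j
    have h1 : u.val = Matrix.diagonal d := rfl
    have h2 : (u⁻¹).val = Matrix.diagonal (fun i => (d i)⁻¹) := rfl
    rw [hB, h1, h2, Matrix.mul_diagonal, Matrix.diagonal_mul]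
  -- eigenvalue of B via spectrum
  have hspec : (lam : ℂ) ∈ spectrum ℂ B := by
    have hbs : spectrum ℂ B = spectrum ℂ (Tg n r s) := by
      rw [hB]; exact spectrum.units_conjugate
    rw [hbs]
    exact aux_mem_spectrum _ hroot
  have heig : Module.End.HasEigenvalue (Matrix.toLin' B) (lam : ℂ) := by
    rw [Module.End.hasEigenvalue_iff_mem_spectrum]
    rw [show Matrix.toLin' B = Matrix.toLinAlgEquiv' B from rfl, AlgEquiv.spectrum_eq]
    exact hspec
  obtain ⟨k, hk⟩ := eigenvalue_mem_ball heig
  -- diagonal entry is zero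
  have hBkk : B k k = 0 := by
    rw [hBentry]
    have : Tg n r s k k = 0 := by
      simp only [Tg, Matrix.of_apply]
      rw [if_neg]
      push_neg
      omega
    rw [this]; ring
  -- row sum bound
  have hterm : ∀ j : Fin n, ‖B k j‖ ≤
      (if (k : ℤ) - (j : ℤ) = (r : ℤ) then ρ ^ r else 0) +
      (if (k : ℤ) - (j : ℤ) = -(s : ℤ) then (ρ ^ s)⁻¹ else 0) := by
    intro j
    rw [hBentry]
    by_cases h1 : (k : ℤ) - (j : ℤ) = (r : ℤ)
    · have hk' : (k : ℕ) = (j : ℕ) + r := by omega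
      have hT : Tg n r s k j = 1 := by
        simp only [Tg, Matrix.of_apply]; rw [if_pos (Or.inl h1)]
      rw [hT, if_pos h1, if_neg (by omega), add_zero, mul_one, hd]
      have : (ρ : ℂ) ^ (k : ℕ) * ((ρ : ℂ) ^ (j : ℕ))⁻¹ = ((ρ ^ r : ℝ) : ℂ) := by
        rw [hk', pow_add]
        push_cast
        field_simp
      rw [this, Complex.norm_real, Real.norm_eq_abs, abs_of_pos (pow_pos hρ r)]
    · by_cases h2 : (k : ℤ) - (j : ℤ) = -(s : ℤ)
      · have hj' : (j : ℕ) = (k : ℕ) + s := by omega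
        have hT : Tg n r s k j = 1 := by
          simp only [Tg, Matrix.of_apply]; rw [if_pos (Or.inr h2)]
        rw [hT, if_pos h2, if_neg h1, zero_add, mul_one, hd]
        have : (ρ : ℂ) ^ (k : ℕ) * ((ρ : ℂ) ^ (j : ℕ))⁻¹ = (((ρ ^ s)⁻¹ : ℝ) : ℂ) := by
          rw [hj', pow_add]
          push_cast
          field_simp
        rw [this, Complex.norm_real, Real.norm_eq_abs,
          abs_of_pos (inv_pos.mpr (pow_pos hρ s))]
      · have hT : Tg n r s k j = 0 := by
          simp only [Tg, Matrix.of_apply]; rw [if_neg (by tauto)]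
        rw [hT, if_neg h1, if_neg h2]
        simp
  have hsum1 : ∀ (c : ℤ) (x : ℝ), 0 ≤ x →
      (∑ j : Fin n, (if (k : ℤ) - (j : ℤ) = c then x else 0)) ≤ x := by
    intro c x hx
    classical
    rw [← Finset.sum_filter, Finset.sum_const, nsmul_eq_mul]
    have hcard : (Finset.univ.filter fun j : Fin n => (k : ℤ) - (j : ℤ) = c).card ≤ 1 := by
      apply Finset.card_le_one.mpr
      intro a1 ha1 b1 hb1
      simp only [Finset.mem_filter] at ha1 hb1
      have : ((a1 : ℕ) : ℤ) = ((b1 : ℕ) : ℤ) := by omega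
      exact Fin.ext (by exact_mod_cast this)
    have : ((Finset.univ.filter fun j : Fin n => (k : ℤ) - (j : ℤ) = c).card : ℝ) ≤ 1 := by
      exact_mod_cast hcard
    exact mul_le_of_le_one_left hx this
  have hrow : (∑ j ∈ Finset.univ.erase k, ‖B k j‖) ≤ ρ ^ r + (ρ ^ s)⁻¹ := by
    have h1 : (∑ j ∈ Finset.univ.erase k, ‖B k j‖) ≤ ∑ j : Fin n, ‖B k j‖ :=
      Finset.sum_le_sum_of_subset_of_nonneg (Finset.erase_subset _ _)
        (fun j _ _ => norm_nonneg _)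
    refine h1.trans ?_
    calc ∑ j : Fin n, ‖B k j‖
        ≤ ∑ j : Fin n, ((if (k : ℤ) - (j : ℤ) = (r : ℤ) then ρ ^ r else 0) +
            (if (k : ℤ) - (j : ℤ) = -(s : ℤ) then (ρ ^ s)⁻¹ else 0)) :=
          Finset.sum_le_sum fun j _ => hterm j
      _ = (∑ j : Fin n, if (k : ℤ) - (j : ℤ) = (r : ℤ) then ρ ^ r else 0) +
            (∑ j : Fin n, if (k : ℤ) - (j : ℤ) = -(s : ℤ) then (ρ ^ s)⁻¹ else 0) :=
          Finset.sum_add_distrib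
      _ ≤ ρ ^ r + (ρ ^ s)⁻¹ :=
          add_le_add (hsum1 _ _ (pow_pos hρ r).le)
            (hsum1 _ _ (inv_pos.mpr (pow_pos hρ s)).le)
  have hlamle : lam ≤ ρ ^ r + (ρ ^ s)⁻¹ := by
    rw [Metric.mem_closedBall, hBkk, dist_zero_right] at hk
    have hnorm : ‖((lam : ℝ) : ℂ)‖ = lam := by
      rw [Complex.norm_real, Real.norm_eq_abs, abs_of_pos hlam]
    rw [hnorm] at hk
    exact hk.trans hrow
  have key : ρ ^ r + (ρ ^ s)⁻¹ =
      ((r : ℝ) + s) /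
        ((r : ℝ) ^ ((r : ℝ) / ((r : ℝ) + s)) * (s : ℝ) ^ ((s : ℝ) / ((r : ℝ) + s))) := by
    have hba : (0 : ℝ) ≤ (s : ℝ) / r := (div_pos hb ha).le
    have h1 : ρ ^ r = (s : ℝ) ^ ((r : ℝ) / ((r : ℝ) + s)) / (r : ℝ) ^ ((r : ℝ) / ((r : ℝ) + s)) := by
      rw [← Real.rpow_natCast ρ r, hρdef, ← Real.rpow_mul hba, one_div, inv_mul_eq_div,
        Real.div_rpow hb.le ha.le]
    have h2 : (ρ ^ s)⁻¹ = (r : ℝ) ^ ((s : ℝ) / ((r : ℝ) + s)) / (s : ℝ) ^ ((s : ℝ) / ((r : ℝ) + s)) := by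
      rw [← Real.rpow_natCast ρ s, hρdef, ← Real.rpow_mul hba, one_div, inv_mul_eq_div,
        ← Real.inv_rpow hba, inv_div, Real.div_rpow ha.le hb.le]
    have hbb : (s : ℝ) ^ ((r : ℝ) / ((r : ℝ) + s)) * (s : ℝ) ^ ((s : ℝ) / ((r : ℝ) + s)) = s := by
      rw [← Real.rpow_add hb, ← add_div, div_self hσ.ne', Real.rpow_one]
    have haa : (r : ℝ) ^ ((r : ℝ) / ((r : ℝ) + s)) * (r : ℝ) ^ ((s : ℝ) / ((r : ℝ) + s)) = r := by
      rw [← Real.rpow_add ha, ← add_div, div_self hσ.ne', Real.rpow_one]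
    have hra : (r : ℝ) ^ ((r : ℝ) / ((r : ℝ) + s)) ≠ 0 :=
      (Real.rpow_pos_of_pos ha _).ne'
    have hsb : (s : ℝ) ^ ((s : ℝ) / ((r : ℝ) + s)) ≠ 0 :=
      (Real.rpow_pos_of_pos hb _).ne'
    rw [h1, h2, div_add_div _ _ hra hsb, hbb, haa, add_comm ((s:ℝ)) ((r:ℝ))]
  rw [← key]
  exact hlamle
end

section
/- Let m be a positive integer and let B be the m×m real symmetric matrix with B_{1,1} = 1, B_{i,i} = 2 for 2 ≤ i ≤ m, B_{i,i+1} = B_{i+1,i} = 1 for 1 ≤ i ≤ m−1, and all other entries zero (the tridiagonal Toeplitz matrix tridiag(1, 2, 1) with its top-left entry changed from 2 to 1). Then the eigenvalues of B are exactly 2 + 2·cos(2jπ/(2m+1)) for j = 1, …, m. -/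
open Matrix Polynomial Real

lemma my_eval_charpoly {m : ℕ} (M : Matrix (Fin m) (Fin m) ℝ) (r : ℝ) :
    M.charpoly.eval r = (r • (1 : Matrix (Fin m) (Fin m) ℝ) - M).det := by
  rw [Matrix.charpoly, _root_.eval_det, Matrix.matPolyEquiv_charmatrix]
  congr 1
  rw [eval_sub, eval_X, eval_C]
  congr 1
  simp [Matrix.scalar, Matrix.smul_eq_diagonal_mul]

private lemma stmt18_isRoot (m : ℕ) (hm : 0 < m) (B : Matrix (Fin m) (Fin m) ℝ)
    (hB : ∀ i j : Fin m, B i j =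
      if i = j then (if (i : ℕ) = 0 then 1 else 2)
      else if (i : ℤ) - (j : ℤ) = 1 ∨ (j : ℤ) - (i : ℤ) = 1 then 1 else 0)
    (j : Fin m) :
    B.charpoly.IsRoot (2 + 2 * Real.cos (2 * ((j : ℕ) + 1) * π / (2 * m + 1))) := by
  set α : ℝ := ((j : ℕ) + 1) * π / (2 * m + 1) with hα
  set lam : ℝ := 2 + 2 * Real.cos (2 * α) with hlam
  have hlam' : (2 : ℝ) + 2 * Real.cos (2 * ((j : ℕ) + 1) * π / (2 * m + 1)) = lam := by
    rw [hlam, hα]; ring_nf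
  rw [hlam']
  set v : Fin m → ℝ := fun i => Real.sin ((2 * (i : ℕ) + 1) * α) with hv
  have hm1 : (0 : ℝ) < 2 * m + 1 := by positivity
  have hαpos : 0 < α := by
    apply div_pos _ hm1
    positivity
  have hαlt : α < π := by
    rw [hα, div_lt_iff₀ hm1]
    have hj : ((j : ℕ) : ℝ) + 1 ≤ m := by exact_mod_cast j.2
    nlinarith [Real.pi_pos]
  have hvne : v ≠ 0 := by
    intro h
    have h0 := congrFun h ⟨0, hm⟩
    simp only [hv, Pi.zero_apply] at h0
    have : Real.sin α > 0 := Real.sin_pos_of_pos_of_lt_pi hαpos hαlt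
    simp only [Fin.val_mk, Nat.cast_zero] at h0
    rw [show (2*(0:ℝ)+1) * α = α by ring] at h0
    linarith
  -- the mulVec identity
  have hmv : (lam • (1 : Matrix (Fin m) (Fin m) ℝ) - B).mulVec v = 0 := by
    funext i
    set c : ℝ := (if (i : ℕ) = 0 then (1:ℝ) else 2) with hc
    have hsum : ∀ k : Fin m, B i k
        = (if i = k then c else 0)
          + (if (i:ℤ) - (k:ℤ) = 1 then 1 else 0)
          + (if (k:ℤ) - (i:ℤ) = 1 then 1 else 0) := by
      intro k
      rw [hB]
      by_cases h : i = k
      · subst h; simp [hc]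
      · have h' : ((i:ℤ)) ≠ (k:ℤ) := by
          simpa [Fin.ext_iff] using h
        by_cases hP : (i:ℤ) - (k:ℤ) = 1 <;> by_cases hQ : (k:ℤ) - (i:ℤ) = 1
        · exfalso; omega
        · simp [h, hP, hQ]
        · simp [h, hP, hQ]
        · simp [h, hP, hQ]
    have key : ∑ k, B i k * v k = lam * v i := by
      simp only [hsum, add_mul, Finset.sum_add_distrib, ite_mul, zero_mul, one_mul]
      have s1 : (∑ k : Fin m, if i = k then c * v k else 0) = c * v i := by
        rw [Finset.sum_ite_eq]
        simp
      have s2 : (∑ k : Fin m, if (i:ℤ) - (k:ℤ) = 1 then v k else 0)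
          = if h : 0 < (i:ℕ) then v ⟨(i:ℕ) - 1, by omega⟩ else 0 := by
        split_ifs with h
        · have hiff : ∀ k : Fin m, ((i:ℤ) - (k:ℤ) = 1) ↔ k = (⟨(i:ℕ) - 1, by omega⟩ : Fin m) := by
            intro k
            rw [Fin.ext_iff]
            simp only [Fin.val_mk]
            omega
          rw [Finset.sum_congr rfl (fun k _ => if_congr (hiff k) rfl rfl), Finset.sum_ite_eq']
          simp
        · apply Finset.sum_eq_zero
          intro k _
          rw [if_neg]
          omega
      have s3 : (∑ k : Fin m, if (k:ℤ) - (i:ℤ) = 1 then v k else 0)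
          = if h : (i:ℕ) + 1 < m then v ⟨(i:ℕ) + 1, h⟩ else 0 := by
        split_ifs with h
        · have hiff : ∀ k : Fin m, ((k:ℤ) - (i:ℤ) = 1) ↔ k = (⟨(i:ℕ) + 1, h⟩ : Fin m) := by
            intro k
            rw [Fin.ext_iff]
            simp only [Fin.val_mk]
            omega
          rw [Finset.sum_congr rfl (fun k _ => if_congr (hiff k) rfl rfl), Finset.sum_ite_eq']
          simp
        · apply Finset.sum_eq_zero
          intro k _
          rw [if_neg]
          have := k.2
          omega
      rw [s1, s2, s3]
      -- trigonometry
      set n : ℕ := (i : ℕ) with hn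
      set x : ℝ := (2 * n + 1) * α with hx
      have hA : Real.sin (x - 2*α) + Real.sin (x + 2*α) = 2 * Real.cos (2*α) * Real.sin x := by
        rw [Real.sin_sub, Real.sin_add]; ring
      have hvi : v i = Real.sin x := rfl
      have hC : n + 1 = m → Real.sin (x + 2*α) = 0 := by
        intro hnm
        have : x + 2*α = ((j:ℕ) + 1) * π := by
          rw [hx, hα]
          field_simp
          have hmr : (m:ℝ) = (n:ℝ) + 1 := by exact_mod_cast hnm.symm
          rw [hmr]; ring
        rw [this]
        have := Real.sin_nat_mul_pi ((j:ℕ) + 1)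
        push_cast at this
        exact this
      have hB0 : n = 0 → Real.sin (x - 2*α) = - Real.sin x := by
        intro h0
        rw [hx, h0]
        push_cast
        rw [show (2*(0:ℝ)+1) * α - 2*α = -α by ring]
        rw [Real.sin_neg]
        congr 1
        ring_nf
      by_cases h0 : (i : ℕ) = 0 <;> by_cases hlast : (i:ℕ) + 1 < m
      · -- n = 0, not last
        rw [show c = 1 by rw [hc, if_pos h0], dif_neg (by omega), dif_pos hlast]
        have h2 : v ⟨(i:ℕ)+1, hlast⟩ = Real.sin (x + 2*α) := by
          show Real.sin _ = _
          congr 1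
          rw [hx]
          push_cast
          ring
        rw [hvi, h2, hlam]
        have := hB0 h0
        linear_combination hA - this
      · -- n = 0, last (m = 1)
        rw [show c = 1 by rw [hc, if_pos h0], dif_neg (by omega), dif_neg hlast]
        rw [hvi, hlam]
        have h1 := hB0 h0
        have h2 := hC (by omega)
        linear_combination hA - h1 - h2
      · -- n > 0, not last
        rw [show c = 2 by rw [hc, if_neg h0], dif_pos (by omega : 0 < (i:ℕ)), dif_pos hlast]
        have h1 : v ⟨(i:ℕ)-1, by omega⟩ = Real.sin (x - 2*α) := by
          show Real.sin _ = _
          congr 1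
          rw [hx]
          have : ((((i:ℕ) - 1 : ℕ)) : ℝ) = (n : ℝ) - 1 := by
            rw [hn]; push_cast [Nat.cast_sub (by omega : 1 ≤ (i:ℕ))]; ring
          rw [this]
          ring
        have h2 : v ⟨(i:ℕ)+1, hlast⟩ = Real.sin (x + 2*α) := by
          show Real.sin _ = _
          congr 1
          rw [hx]
          push_cast
          ring
        rw [hvi, h1, h2, hlam]
        linear_combination hA
      · -- n > 0, last
        rw [show c = 2 by rw [hc, if_neg h0], dif_pos (by omega : 0 < (i:ℕ)), dif_neg hlast]
        have h1 : v ⟨(i:ℕ)-1, by omega⟩ = Real.sin (x - 2*α) := by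
          show Real.sin _ = _
          congr 1
          rw [hx]
          have : ((((i:ℕ) - 1 : ℕ)) : ℝ) = (n : ℝ) - 1 := by
            rw [hn]; push_cast [Nat.cast_sub (by omega : 1 ≤ (i:ℕ))]; ring
          rw [this]
          ring
        have h2 := hC (by omega : n + 1 = m)
        rw [hvi, h1, hlam]
        linear_combination hA - h2
    show ∑ k, (lam • (1 : Matrix (Fin m) (Fin m) ℝ) - B) i k * v k = 0
    simp only [Matrix.sub_apply, Matrix.smul_apply, Matrix.one_apply, smul_eq_mul,
      mul_ite, mul_one, mul_zero, sub_mul, ite_mul, zero_mul, Finset.sum_sub_distrib]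
    rw [key, Finset.sum_ite_eq]
    simp
  have hdet : (lam • (1 : Matrix (Fin m) (Fin m) ℝ) - B).det = 0 := by
    rw [← Matrix.exists_mulVec_eq_zero_iff]
    exact ⟨v, hvne, hmv⟩
  show B.charpoly.eval lam = 0
  rw [my_eval_charpoly]
  exact hdet


theorem stmt_18 (m : ℕ) (hm : 0 < m) (B : Matrix (Fin m) (Fin m) ℝ)
    (hB : ∀ i j : Fin m, B i j =
      if i = j then (if (i : ℕ) = 0 then 1 else 2)
      else if (i : ℤ) - (j : ℤ) = 1 ∨ (j : ℤ) - (i : ℤ) = 1 then 1 else 0) :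
    B.charpoly.roots =
      (Finset.univ : Finset (Fin m)).val.map
        (fun j => 2 + 2 * Real.cos (2 * ((j : ℕ) + 1) * π / (2 * m + 1))) := by
  set f : Fin m → ℝ := fun j => 2 + 2 * Real.cos (2 * ((j : ℕ) + 1) * π / (2 * m + 1)) with hf
  have hm1 : (0 : ℝ) < 2 * m + 1 := by positivity
  have harg : ∀ j : Fin m, 2 * ((j : ℕ) + 1) * π / (2 * m + 1) ∈ Set.Icc 0 π := by
    intro j
    constructor
    · positivity
    · rw [div_le_iff₀ hm1]
      have hj : ((j : ℕ) : ℝ) + 1 ≤ m := by exact_mod_cast j.2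
      nlinarith [Real.pi_pos]
  have hinj : Function.Injective f := by
    intro a b hab
    simp only [hf] at hab
    have h1 : Real.cos (2 * ((a : ℕ) + 1) * π / (2 * m + 1))
        = Real.cos (2 * ((b : ℕ) + 1) * π / (2 * m + 1)) := by linarith
    have h2 := Real.injOn_cos (harg a) (harg b) h1
    have h3 : ((a : ℕ) : ℝ) = ((b : ℕ) : ℝ) := by
      rw [div_left_inj' hm1.ne'] at h2
      have h4 := mul_right_cancel₀ Real.pi_ne_zero h2
      linarith
    exact Fin.ext (by exact_mod_cast h3)
  have hne : B.charpoly ≠ 0 := B.charpoly_monic.ne_zero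
  have hmem : ∀ j : Fin m, f j ∈ B.charpoly.roots := by
    intro j
    rw [Polynomial.mem_roots hne]
    exact stmt18_isRoot m hm B hB j
  have hnodup : ((Finset.univ : Finset (Fin m)).val.map f).Nodup :=
    Finset.univ.nodup.map hinj
  have hle : (Finset.univ : Finset (Fin m)).val.map f ≤ B.charpoly.roots := by
    rw [Multiset.le_iff_subset hnodup]
    intro a ha
    obtain ⟨j, _, rfl⟩ := Multiset.mem_map.mp ha
    exact hmem j
  have hcard : Multiset.card B.charpoly.roots ≤
      Multiset.card ((Finset.univ : Finset (Fin m)).val.map f) := by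
    rw [Multiset.card_map]
    have := B.charpoly.card_roots'
    rw [Matrix.charpoly_natDegree_eq_dim] at this
    simpa using this
  refine (Multiset.eq_of_le_of_card_le hle hcard).symm.trans ?_
  show Multiset.map f (Finset.univ : Finset (Fin m)).val
      = Multiset.map _ (Multiset.bind (Finset.univ : Finset (Fin m)).val
          (fun a => ({(a : ℕ)} : Multiset ℕ)))
  rw [Multiset.bind_singleton, Multiset.map_map]
  rfl
end
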